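/- Define a type-BC unit interval order on n elements to be a partial order P on an n-element set that contains no induced subposet isomorphic to the disjoint union of two 2-element chains nor to the disjoint union of a 3-element chain and a 1-element chain, together with a subset C of the minimal elements of P (the grounded elements) such that β(c) ≤ β(d) for all c ∈ C and d ∉ C, where β(y) = #{x : x ≤_P y} − #{z : z ≥_P y}; an isomorphism of such objects is an order isomorphism carrying grounded set onto grounded set. Then for every w ∈ B_n whose window avoids the five signed patterns 1 2̄, 2̄ 1, 2̄ 1̄, 3 1 2, 3 1̄ 2, the pair (Q(w), {1,…,p}) is a type-BC unit interval order on n elements, and the assignment w ↦ (Q(w), {1,…,p}) induces a bijection from the set of elements of B_n whose windows avoid the five signed patterns onto the set of isomorphism classes of type-BC unit interval orders on n elements. -/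

import Mathlib

open scoped BigOperators

/-- Membership in the hyperoctahedral group `B_n`, viewed as permutations `w` of `ℤ`
satisfying `w (-i) = - w i` and fixing everything outside `{-n, …, -1, 1, …, n}`. -/
def IsBn (n : ℕ) (w : Equiv.Perm ℤ) : Prop :=
  (∀ i : ℤ, w (-i) = - w i) ∧ ∀ i : ℤ, (n : ℤ) < |i| → w i = i

/-- The window of `w` avoids the signed pattern `1 2̄`. -/
def Avoids12bar (n : ℕ) (w : Equiv.Perm ℤ) : Prop :=
  ¬ ∃ i j : ℤ, 1 ≤ i ∧ i < j ∧ j ≤ (n : ℤ) ∧ 0 < w i ∧ w j < 0 ∧ w i < -(w j)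

/-- The window of `w` avoids the signed pattern `2̄ 1`. -/
def Avoids2bar1 (n : ℕ) (w : Equiv.Perm ℤ) : Prop :=
  ¬ ∃ i j : ℤ, 1 ≤ i ∧ i < j ∧ j ≤ (n : ℤ) ∧ w i < 0 ∧ 0 < w j ∧ w j < -(w i)

/-- The window of `w` avoids the signed pattern `2̄ 1̄`. -/
def Avoids2bar1bar (n : ℕ) (w : Equiv.Perm ℤ) : Prop :=
  ¬ ∃ i j : ℤ, 1 ≤ i ∧ i < j ∧ j ≤ (n : ℤ) ∧ w i < w j ∧ w j < 0

/-- The window of `w` avoids the signed pattern `3 1 2`. -/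
def Avoids312s (n : ℕ) (w : Equiv.Perm ℤ) : Prop :=
  ¬ ∃ i j k : ℤ, 1 ≤ i ∧ i < j ∧ j < k ∧ k ≤ (n : ℤ) ∧ 0 < w j ∧ w j < w k ∧ w k < w i

/-- The window of `w` avoids the signed pattern `3 1̄ 2`. -/
def Avoids31bar2 (n : ℕ) (w : Equiv.Perm ℤ) : Prop :=
  ¬ ∃ i j k : ℤ, 1 ≤ i ∧ i < j ∧ j < k ∧ k ≤ (n : ℤ) ∧
    w j < 0 ∧ 0 < w k ∧ w k < w i ∧ -(w j) < w k

/-- The window of `w` avoids the five signed patterns `1 2̄`, `2̄ 1`, `2̄ 1̄`, `3 1 2`, `3 1̄ 2`. -/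
def AvoidsFive (n : ℕ) (w : Equiv.Perm ℤ) : Prop :=
  Avoids12bar n w ∧ Avoids2bar1 n w ∧ Avoids2bar1bar n w ∧ Avoids312s n w ∧ Avoids31bar2 n w

/-- The long one-line notation `(w(-n), …, w(-1), w(1), …, w(n))` avoids the pattern `3412`. -/
def LongAvoids3412 (n : ℕ) (w : Equiv.Perm ℤ) : Prop :=
  ¬ ∃ i1 i2 i3 i4 : ℤ, -(n : ℤ) ≤ i1 ∧ i1 < i2 ∧ i2 < i3 ∧ i3 < i4 ∧ i4 ≤ (n : ℤ) ∧
    i1 ≠ 0 ∧ i2 ≠ 0 ∧ i3 ≠ 0 ∧ i4 ≠ 0 ∧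
    w i3 < w i4 ∧ w i4 < w i1 ∧ w i1 < w i2

/-- The long one-line notation `(w(-n), …, w(-1), w(1), …, w(n))` avoids the pattern `4231`. -/
def LongAvoids4231 (n : ℕ) (w : Equiv.Perm ℤ) : Prop :=
  ¬ ∃ i1 i2 i3 i4 : ℤ, -(n : ℤ) ≤ i1 ∧ i1 < i2 ∧ i2 < i3 ∧ i3 < i4 ∧ i4 ≤ (n : ℤ) ∧
    i1 ≠ 0 ∧ i2 ≠ 0 ∧ i3 ≠ 0 ∧ i4 ≠ 0 ∧
    w i4 < w i2 ∧ w i2 < w i3 ∧ w i3 < w i1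

/-- `p`, the number of negative letters in the window `(w 1, …, w n)`. -/
noncomputable def negCount (n : ℕ) (w : Equiv.Perm ℤ) : ℕ :=
  ((Finset.Icc (1 : ℤ) (n : ℤ)).filter (fun i => w i < 0)).card

/-- `m_j = max ({p} ∪ {w 1, …, w j})`. -/
noncomputable def mval (n : ℕ) (w : Equiv.Perm ℤ) (j : ℤ) : ℤ :=
  (insert ((negCount n w : ℤ)) ((Finset.Icc (1 : ℤ) j).image (fun i => w i))).max'
    (Finset.insert_nonempty _ _)

/-- The strict order `Q(w)` on `{1, …, n}`: `j <_{Q(w)} i` iff `i > m_j`. -/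
def qlt (n : ℕ) (w : Equiv.Perm ℤ) (j i : ℤ) : Prop := mval n w j < i

/-- `i` and `j` are incomparable in `Q(w)`. -/
def QIncomp (n : ℕ) (w : Equiv.Perm ℤ) (i j : ℤ) : Prop :=
  i ≠ j ∧ ¬ qlt n w i j ∧ ¬ qlt n w j i

/-- The order `Q(w)` transported to `Fin n` (element `i : Fin n` stands for `i + 1`). -/
def qltF (n : ℕ) (w : Equiv.Perm ℤ) (j i : Fin n) : Prop :=
  mval n w (((j : ℕ) : ℤ) + 1) < ((i : ℕ) : ℤ) + 1

/-- The grounded elements of `Q(w)`, transported to `Fin n`. -/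
def groundedF (n : ℕ) (w : Equiv.Perm ℤ) : Set (Fin n) :=
  {i : Fin n | (i : ℕ) + 1 ≤ negCount n w}

/-- Incomparability for a strict relation. -/
def Incomp {n : ℕ} (lt : Fin n → Fin n → Prop) (x y : Fin n) : Prop :=
  x ≠ y ∧ ¬ lt x y ∧ ¬ lt y x

/-- `β(y) = #{x : x ≤ y} - #{z : z ≥ y}`. -/
noncomputable def betaVal {n : ℕ} (lt : Fin n → Fin n → Prop) (y : Fin n) : ℤ :=
  (Set.ncard {x : Fin n | lt x y ∨ x = y} : ℤ) -
    (Set.ncard {z : Fin n | lt y z ∨ z = y} : ℤ)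

/-- A type-BC unit interval order on `n` elements: a strict partial order containing no
induced `2 + 2` and no induced `3 + 1`, together with a set `g` of grounded elements,
all minimal, such that `β(c) ≤ β(d)` whenever `c` is grounded and `d` is not. -/
def IsBCUIO (n : ℕ) (lt : Fin n → Fin n → Prop) (g : Set (Fin n)) : Prop :=
  (∀ x, ¬ lt x x) ∧
  (∀ x y z, lt x y → lt y z → lt x z) ∧
  (¬ ∃ x y z t : Fin n, lt x y ∧ lt z t ∧
    Incomp lt x z ∧ Incomp lt x t ∧ Incomp lt y z ∧ Incomp lt y t) ∧
  (¬ ∃ x y z t : Fin n, lt x y ∧ lt y z ∧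
    Incomp lt x t ∧ Incomp lt y t ∧ Incomp lt z t) ∧
  (∀ c ∈ g, ∀ x, ¬ lt x c) ∧
  (∀ c ∈ g, ∀ d, d ∉ g → betaVal lt c ≤ betaVal lt d)

/-- Isomorphism of type-BC unit interval orders: an order isomorphism carrying the
grounded set onto the grounded set. -/
def BCIso (n : ℕ) (lt lt' : Fin n → Fin n → Prop) (g g' : Set (Fin n)) : Prop :=
  ∃ e : Equiv (Fin n) (Fin n),
    (∀ i j, lt i j ↔ lt' (e i) (e j)) ∧ ∀ i, i ∈ g ↔ e i ∈ g'


section Helpers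

open Finset

lemma card_fin_lt (n t : ℕ) (ht : t ≤ n) :
    ((Finset.univ : Finset (Fin n)).filter (fun z : Fin n => (z : ℕ) < t)).card = t := by
  apply Finset.card_eq_of_bijective (fun i hi => (⟨i, lt_of_lt_of_le hi ht⟩ : Fin n))
  · intro a ha
    simp only [Finset.mem_filter] at ha
    exact ⟨(a : ℕ), ha.2, rfl⟩
  · intro i hi
    simp [hi]
  · intro i j hi hj h
    simpa using congrArg Fin.val h

lemma card_fin_ge (n t : ℕ) (ht : t ≤ n) :
    ((Finset.univ : Finset (Fin n)).filter (fun z : Fin n => t ≤ (z : ℕ))).card = n - t := by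
  have h := Finset.card_filter_add_card_filter_not
    (s := (Finset.univ : Finset (Fin n))) (p := fun z : Fin n => (z : ℕ) < t)
  have h2 : (Finset.univ.filter (fun z : Fin n => ¬ (z : ℕ) < t))
      = Finset.univ.filter (fun z : Fin n => t ≤ (z : ℕ)) := by
    apply Finset.filter_congr; intro x _; simp [not_lt]
  rw [card_fin_lt n t ht, h2, Finset.card_univ, Fintype.card_fin] at h
  omega

lemma ncard_setOf_fin {n : ℕ} (P : Fin n → Prop) [DecidablePred P] :
    Set.ncard {z : Fin n | P z} = ((Finset.univ : Finset (Fin n)).filter P).card := by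
  rw [Set.ncard_eq_toFinset_card']
  congr 1
  ext z
  simp

lemma downclosed_mem_iff {n : ℕ} (S : Finset (Fin n))
    (h : ∀ i j : Fin n, i ≤ j → j ∈ S → i ∈ S) (i : Fin n) :
    i ∈ S ↔ (i : ℕ) < S.card := by
  constructor
  · intro hi
    have hsub : (Finset.univ.filter (fun z : Fin n => (z : ℕ) < (i : ℕ) + 1)) ⊆ S := by
      intro z hz
      simp only [Finset.mem_filter] at hz
      exact h z i (by omega) hi
    have h1 := Finset.card_le_card hsub
    rw [card_fin_lt n ((i : ℕ) + 1) i.isLt] at h1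
    omega
  · intro hi
    by_contra hni
    have hsub : S ⊆ Finset.univ.filter (fun z : Fin n => (z : ℕ) < (i : ℕ)) := by
      intro z hz
      simp only [Finset.mem_filter, Finset.mem_univ, true_and]
      rcases lt_or_ge (z : ℕ) (i : ℕ) with h' | h'
      · exact h'
      · exact absurd (h i z (by omega) hz) hni
    have h1 := Finset.card_le_card hsub
    rw [card_fin_lt n (i : ℕ) (le_of_lt i.isLt)] at h1
    omega

lemma upclosed_mem_iff {n : ℕ} (S : Finset (Fin n))
    (h : ∀ i j : Fin n, i ≤ j → i ∈ S → j ∈ S) (i : Fin n) :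
    i ∈ S ↔ n - S.card ≤ (i : ℕ) := by
  have hc : (Finset.univ.filter (fun z : Fin n => z ∉ S)).card = n - S.card := by
    have h1 := Finset.card_filter_add_card_filter_not
      (s := (Finset.univ : Finset (Fin n))) (p := fun z : Fin n => z ∈ S)
    simp only [Finset.filter_mem_eq_inter, Finset.univ_inter, Finset.card_univ,
      Fintype.card_fin] at h1
    omega
  have hSc : S.card ≤ n := by
    simpa using Finset.card_le_card (Finset.subset_univ S)
  have hdc := downclosed_mem_iff (Finset.univ.filter (fun z : Fin n => z ∉ S))
    (by
      intro a b hab hb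
      simp only [Finset.mem_filter, Finset.mem_univ, true_and] at hb ⊢
      intro ha
      exact hb (h a b hab ha))
  constructor
  · intro hi
    by_contra hni
    have hmem : i ∈ Finset.univ.filter (fun z : Fin n => z ∉ S) := by
      rw [hdc i, hc]; omega
    simp only [Finset.mem_filter, Finset.mem_univ, true_and] at hmem
    exact hmem hi
  · intro hi
    by_contra hni
    have hmem : i ∈ Finset.univ.filter (fun z : Fin n => z ∉ S) := by simp [hni]
    rw [hdc i, hc] at hmem
    omega

end Helpers

section BnBasics

open Finset

variable {n : ℕ} {w : Equiv.Perm ℤ}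

lemma IsBn.w0 (hw : IsBn n w) : w 0 = 0 := by
  have h := hw.1 0
  simp only [neg_zero] at h
  omega

lemma IsBn.ne0 (hw : IsBn n w) {i : ℤ} (h1 : 1 ≤ i) : w i ≠ 0 := by
  intro h
  have : w i = w 0 := by rw [h, hw.w0]
  have := w.injective this
  omega

lemma IsBn.abs_le (hw : IsBn n w) {i : ℤ} (h1 : 1 ≤ i) (h2 : i ≤ (n : ℤ)) : |w i| ≤ n := by
  by_contra h
  push_neg at h
  have hfix : w (w i) = w i := hw.2 (w i) h
  have : w i = i := w.injective hfix
  rw [this] at h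
  have : |i| = i := abs_of_nonneg (by omega)
  omega

lemma IsBn.abs_inj (hw : IsBn n w) {i j : ℤ} (hi : 1 ≤ i) (hj : 1 ≤ j)
    (h : |w i| = |w j|) : i = j := by
  rcases abs_eq_abs.mp h with h' | h'
  · exact w.injective h'
  · have : w i = w (-j) := by rw [hw.1 j]; omega
    have := w.injective this
    omega

lemma IsBn.abs_surj (hw : IsBn n w) {v : ℤ} (h1 : 1 ≤ v) (h2 : v ≤ (n : ℤ)) :
    ∃ i, 1 ≤ i ∧ i ≤ (n : ℤ) ∧ (w i = v ∨ w i = -v) := by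
  classical
  set A := (Finset.Icc (1 : ℤ) (n : ℤ)).image (fun i => |w i|) with hA
  have hsub : A ⊆ Finset.Icc (1 : ℤ) (n : ℤ) := by
    intro x hx
    simp only [hA, Finset.mem_image, Finset.mem_Icc] at hx
    obtain ⟨i, ⟨hi1, hi2⟩, rfl⟩ := hx
    have hle := hw.abs_le hi1 hi2
    have hne := hw.ne0 hi1
    simp only [Finset.mem_Icc]
    refine ⟨?_, hle⟩
    rcases abs_cases (w i) with ⟨h, _⟩ | ⟨h, _⟩ <;> omega
  have hcard : A.card = (Finset.Icc (1 : ℤ) (n : ℤ)).card := by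
    rw [hA, Finset.card_image_of_injOn]
    intro a ha b hb hab
    simp only [Finset.mem_coe, Finset.mem_Icc] at ha hb
    exact hw.abs_inj ha.1 hb.1 hab
  have hAeq : A = Finset.Icc (1 : ℤ) (n : ℤ) :=
    Finset.eq_of_subset_of_card_le hsub (le_of_eq hcard.symm)
  have hv : v ∈ A := by rw [hAeq]; simp only [Finset.mem_Icc]; exact ⟨h1, h2⟩
  simp only [hA, Finset.mem_image, Finset.mem_Icc] at hv
  obtain ⟨i, ⟨hi1, hi2⟩, habs⟩ := hv
  refine ⟨i, hi1, hi2, ?_⟩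
  rcases abs_cases (w i) with ⟨h, _⟩ | ⟨h, _⟩ <;> omega

lemma negCount_le_n : negCount n w ≤ n := by
  have h1 : ((Finset.Icc (1 : ℤ) (n : ℤ)).filter (fun i => w i < 0)).card
      ≤ (Finset.Icc (1 : ℤ) (n : ℤ)).card := Finset.card_le_card (Finset.filter_subset _ _)
  rw [Int.card_Icc] at h1
  simpa [negCount] using h1.trans (by omega)

end BnBasics

section AvoidLemmas

open Finset

variable {n : ℕ} {w : Equiv.Perm ℤ}

/-- every negative letter's absolute value is smaller than every positive letter. -/
lemma neg_lt_pos (hw : IsBn n w) (ha : AvoidsFive n w) {i j : ℤ}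
    (hi1 : 1 ≤ i) (hi2 : i ≤ (n : ℤ)) (hj1 : 1 ≤ j) (hj2 : j ≤ (n : ℤ))
    (hpos : 0 < w i) (hneg : w j < 0) : -(w j) < w i := by
  have hij : i ≠ j := by intro h; rw [h] at hpos; omega
  have hne : w i ≠ -(w j) := by
    intro h
    have : w i = w (-j) := by rw [hw.1 j]; omega
    have := w.injective this
    omega
  rcases lt_or_gt_of_ne hij with h | h
  · -- i before j : pattern 1 2̄
    by_contra hc
    push_neg at hc
    exact ha.1 ⟨i, j, hi1, h, hj2, hpos, hneg, lt_of_le_of_ne hc hne⟩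
  · -- j before i : pattern 2̄ 1
    by_contra hc
    push_neg at hc
    exact ha.2.1 ⟨j, i, hj1, h, hi2, hneg, hpos, lt_of_le_of_ne hc hne⟩

/-- the set of absolute values of negative window letters, as a finset. -/
private noncomputable def negAbs (n : ℕ) (w : Equiv.Perm ℤ) : Finset ℤ :=
  ((Finset.Icc (1 : ℤ) (n : ℤ)).filter (fun i => w i < 0)).image (fun i => -(w i))

lemma negAbs_card (hw : IsBn n w) : (negAbs n w).card = negCount n w := by
  rw [negAbs, Finset.card_image_of_injOn]
  · rfl
  · intro a _ b _ hab
    have hab' : -(w a) = -(w b) := hab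
    exact w.injective (by omega)

lemma pos_gt_p (hw : IsBn n w) (ha : AvoidsFive n w) {i : ℤ}
    (hi1 : 1 ≤ i) (hi2 : i ≤ (n : ℤ)) (hpos : 0 < w i) : (negCount n w : ℤ) < w i := by
  have hsub : negAbs n w ⊆ Finset.Icc (1 : ℤ) (w i - 1) := by
    intro x hx
    simp only [negAbs, Finset.mem_image, Finset.mem_filter, Finset.mem_Icc] at hx
    obtain ⟨j, ⟨⟨hj1, hj2⟩, hneg⟩, rfl⟩ := hx
    have := neg_lt_pos hw ha hi1 hi2 hj1 hj2 hpos hneg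
    simp only [Finset.mem_Icc]
    omega
  have h1 := Finset.card_le_card hsub
  rw [negAbs_card hw, Int.card_Icc] at h1
  omega

lemma neg_abs_le_p (hw : IsBn n w) (ha : AvoidsFive n w) {j : ℤ}
    (hj1 : 1 ≤ j) (hj2 : j ≤ (n : ℤ)) (hneg : w j < 0) : -(w j) ≤ (negCount n w : ℤ) := by
  have hsub : Finset.Icc (1 : ℤ) (-(w j)) ⊆ negAbs n w := by
    intro u hu
    simp only [Finset.mem_Icc] at hu
    have hun : u ≤ (n : ℤ) := by
      have := hw.abs_le hj1 hj2
      rcases abs_cases (w j) with ⟨h, _⟩ | ⟨h, _⟩ <;> omega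
    obtain ⟨i, hi1, hi2, hcase⟩ := hw.abs_surj hu.1 hun
    rcases hcase with hc | hc
    · exfalso
      have := neg_lt_pos hw ha hi1 hi2 hj1 hj2 (by omega) hneg
      omega
    · simp only [negAbs, Finset.mem_image, Finset.mem_filter, Finset.mem_Icc]
      exact ⟨i, ⟨⟨hi1, hi2⟩, by omega⟩, by omega⟩
  have h1 := Finset.card_le_card hsub
  rw [negAbs_card hw, Int.card_Icc] at h1
  omega

lemma pos_mem_window (hw : IsBn n w) (ha : AvoidsFive n w) {v : ℤ}
    (h1 : (negCount n w : ℤ) < v) (h2 : v ≤ (n : ℤ)) :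
    ∃ i, 1 ≤ i ∧ i ≤ (n : ℤ) ∧ w i = v := by
  obtain ⟨i, hi1, hi2, hcase⟩ := hw.abs_surj (by omega) h2
  rcases hcase with hc | hc
  · exact ⟨i, hi1, hi2, hc⟩
  · exfalso
    have := neg_abs_le_p hw ha hi1 hi2 (by omega)
    omega

lemma neg_mem_window (hw : IsBn n w) (ha : AvoidsFive n w) {u : ℤ}
    (h1 : 1 ≤ u) (h2 : u ≤ (negCount n w : ℤ)) :
    ∃ i, 1 ≤ i ∧ i ≤ (n : ℤ) ∧ w i = -u := by
  have hun : u ≤ (n : ℤ) := by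
    have := negCount_le_n (n := n) (w := w); omega
  obtain ⟨i, hi1, hi2, hcase⟩ := hw.abs_surj h1 hun
  rcases hcase with hc | hc
  · exfalso
    have := pos_gt_p hw ha hi1 hi2 (by omega)
    omega
  · exact ⟨i, hi1, hi2, hc⟩

/-- the negative letters appear in the order `-1, -2, …, -p`. -/
lemma neg_order (hw : IsBn n w) (ha : AvoidsFive n w) {j : ℤ}
    (hj1 : 1 ≤ j) (hj2 : j ≤ (n : ℤ)) (hneg : w j < 0) :
    (((Finset.Icc (1 : ℤ) (j - 1)).filter (fun i => w i < 0)).card : ℤ) = -(w j) - 1 := by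
  have hwjp := neg_abs_le_p hw ha hj1 hj2 hneg
  have himg : ((Finset.Icc (1 : ℤ) (j - 1)).filter (fun i => w i < 0)).image (fun i => -(w i))
      = Finset.Icc (1 : ℤ) (-(w j) - 1) := by
    apply Finset.Subset.antisymm
    · intro x hx
      simp only [Finset.mem_image, Finset.mem_filter, Finset.mem_Icc] at hx
      obtain ⟨i, ⟨⟨hi1, hi2⟩, hineg⟩, rfl⟩ := hx
      have hilt : i < j := by omega
      have hij : w i ≠ w j := fun h => by have := w.injective h; omega
      have : ¬ (w i < w j) := fun hlt =>
        ha.2.2.1 ⟨i, j, hi1, hilt, hj2, hlt, hneg⟩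
      simp only [Finset.mem_Icc]
      omega
    · intro u hu
      simp only [Finset.mem_Icc] at hu
      obtain ⟨i, hi1, hi2, hwi⟩ := neg_mem_window hw ha hu.1 (by omega)
      have hij : i ≠ j := by
        intro h; rw [h] at hwi; omega
      have hilt : i < j := by
        rcases lt_or_gt_of_ne hij with h | h
        · exact h
        · exfalso
          exact ha.2.2.1 ⟨j, i, hj1, h, hi2, by omega, by omega⟩
      simp only [Finset.mem_image, Finset.mem_filter, Finset.mem_Icc]
      exact ⟨i, ⟨⟨hi1, by omega⟩, by omega⟩, by omega⟩
  have hcard : ((Finset.Icc (1 : ℤ) (j - 1)).filter (fun i => w i < 0)).card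
      = (Finset.Icc (1 : ℤ) (-(w j) - 1)).card := by
    rw [← himg, Finset.card_image_of_injOn]
    intro a _ b _ hab
    have hab' : -(w a) = -(w b) := hab
    exact w.injective (by omega)
  rw [hcard, Int.card_Icc]
  omega

end AvoidLemmas

section MvalLemmas

open Finset

variable {n : ℕ} {w : Equiv.Perm ℤ}

lemma mval_ge_p (j : ℤ) : (negCount n w : ℤ) ≤ mval n w j :=
  Finset.le_max' _ _ (Finset.mem_insert_self _ _)

lemma mval_nonneg (j : ℤ) : 0 ≤ mval n w j :=
  le_trans (by positivity) (mval_ge_p j)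

lemma w_le_mval {i j : ℤ} (h1 : 1 ≤ i) (h2 : i ≤ j) : w i ≤ mval n w j :=
  Finset.le_max' _ _ (Finset.mem_insert_of_mem
    (Finset.mem_image_of_mem _ (Finset.mem_Icc.mpr ⟨h1, h2⟩)))

lemma mval_mono {j j' : ℤ} (h : j ≤ j') : mval n w j ≤ mval n w j' :=
  Finset.max'_subset _ (Finset.insert_subset_insert _
    (Finset.image_subset_image (Finset.Icc_subset_Icc_right h)))

lemma mval_le_n (hw : IsBn n w) {j : ℤ} (hj : j ≤ (n : ℤ)) : mval n w j ≤ (n : ℤ) := by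
  apply Finset.max'_le
  intro x hx
  rcases Finset.mem_insert.mp hx with h | h
  · have := negCount_le_n (n := n) (w := w); omega
  · simp only [Finset.mem_image, Finset.mem_Icc] at h
    obtain ⟨i, ⟨hi1, hi2⟩, rfl⟩ := h
    have := hw.abs_le hi1 (by omega)
    rcases abs_cases (w i) with ⟨h', _⟩ | ⟨h', _⟩ <;> omega

lemma mval_attained {j : ℤ} (h : (negCount n w : ℤ) < mval n w j) :
    ∃ i, 1 ≤ i ∧ i ≤ j ∧ w i = mval n w j := by
  have hm : mval n w j ∈ insert ((negCount n w : ℤ))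
      ((Finset.Icc (1 : ℤ) j).image (fun i => w i)) := Finset.max'_mem _ _
  rcases Finset.mem_insert.mp hm with h' | h'
  · omega
  · simp only [Finset.mem_image, Finset.mem_Icc] at h'
    obtain ⟨i, ⟨hi1, hi2⟩, hwi⟩ := h'
    exact ⟨i, hi1, hi2, hwi⟩

lemma le_mval (hw : IsBn n w) (ha : AvoidsFive n w) {j : ℤ}
    (hj1 : 1 ≤ j) (hj2 : j ≤ (n : ℤ)) : j ≤ mval n w j := by
  by_contra hc
  push_neg at hc
  have hm0 := mval_ge_p (n := n) (w := w) j
  have hsub : ∀ i ∈ Finset.Icc (1 : ℤ) j, |w i| ∈ Finset.Icc (1 : ℤ) (mval n w j) := by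
    intro i hi
    simp only [Finset.mem_Icc] at hi ⊢
    have hne := hw.ne0 hi.1
    rcases lt_trichotomy (w i) 0 with h' | h' | h'
    · have := neg_abs_le_p hw ha hi.1 (by omega) h'
      rcases abs_cases (w i) with ⟨h'', _⟩ | ⟨h'', _⟩ <;> omega
    · omega
    · have := w_le_mval (n := n) (w := w) hi.1 hi.2
      rcases abs_cases (w i) with ⟨h'', _⟩ | ⟨h'', _⟩ <;> omega
  have hcard := Finset.card_le_card_of_injOn (fun i => |w i|) hsub
    (fun a ha' b hb' hab => hw.abs_inj (Finset.mem_Icc.mp ha').1 (Finset.mem_Icc.mp hb').1 hab)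
  rw [Int.card_Icc, Int.card_Icc] at hcard
  omega

/-- the cardinality of the strict up-set of `i` in `Q(w)`. -/
lemma upset_ncard (hw : IsBn n w) (i : Fin n) :
    {z : Fin n | qltF n w i z}.ncard = n - (mval n w ((i : ℕ) + 1)).toNat := by
  classical
  have hm0 := mval_nonneg (n := n) (w := w) ((i : ℕ) + 1)
  have hmn := mval_le_n hw (j := ((i : ℕ) : ℤ) + 1) (by exact_mod_cast Nat.succ_le_of_lt i.isLt)
  have hset : {z : Fin n | qltF n w i z}
      = {z : Fin n | (mval n w ((i : ℕ) + 1)).toNat ≤ (z : ℕ)} := by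
    ext z
    simp only [Set.mem_setOf_eq, qltF]
    omega
  rw [hset, ncard_setOf_fin, card_fin_ge]
  omega

lemma grounded_ncard (hw : IsBn n w) :
    (groundedF n w).ncard = negCount n w := by
  classical
  have hpn := negCount_le_n (n := n) (w := w)
  have : groundedF n w = {i : Fin n | (i : ℕ) < negCount n w} := by
    ext i; simp only [groundedF, Set.mem_setOf_eq]; omega
  rw [this, ncard_setOf_fin, card_fin_lt n _ hpn]

lemma upset_ncard' (hw : IsBn n w) (c : Fin n)
    (h : ((c : ℕ) : ℤ) + 1 ≤ mval n w (((c : ℕ) : ℤ) + 1)) :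
    {z : Fin n | qltF n w c z ∨ z = c}.ncard
      = (n - (mval n w (((c : ℕ) : ℤ) + 1)).toNat) + 1 := by
  classical
  have hsplit : {z : Fin n | qltF n w c z ∨ z = c}
      = insert c {z : Fin n | qltF n w c z} := by
    ext z; simp only [Set.mem_setOf_eq, Set.mem_insert_iff]; tauto
  rw [hsplit, Set.ncard_insert_of_notMem, upset_ncard hw]
  simp only [Set.mem_setOf_eq, qltF, not_lt]
  omega

theorem part1 (n : ℕ) (w : Equiv.Perm ℤ) (hw : IsBn n w) (ha : AvoidsFive n w) :
    IsBCUIO n (qltF n w) (groundedF n w) := by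
  classical
  have hkey : ∀ i : Fin n, ((i : ℕ) : ℤ) + 1 ≤ mval n w (((i : ℕ) : ℤ) + 1) := by
    intro i
    exact le_mval hw ha (by omega) (by exact_mod_cast Nat.succ_le_of_lt i.isLt)
  have hgp : ∀ i : Fin n, (negCount n w : ℤ) ≤ mval n w (((i : ℕ) : ℤ) + 1) :=
    fun i => mval_ge_p _
  have hmono : ∀ i j : Fin n, (i : ℕ) ≤ (j : ℕ) →
      mval n w (((i : ℕ) : ℤ) + 1) ≤ mval n w (((j : ℕ) : ℤ) + 1) := by
    intro i j hij; exact mval_mono (by omega)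
  refine ⟨?_, ?_, ?_, ?_, ?_, ?_⟩
  · intro x hx
    have h := hkey x
    simp only [qltF] at hx
    omega
  · intro x y z hxy hyz
    simp only [qltF] at *
    have := hkey y
    omega
  · rintro ⟨x, y, z, t, hxy, hzt, -, hxt, hyz, -⟩
    have h1 : mval n w (((x : ℕ) : ℤ) + 1) < ((y : ℕ) : ℤ) + 1 := hxy
    have h2 : mval n w (((z : ℕ) : ℤ) + 1) < ((t : ℕ) : ℤ) + 1 := hzt
    have h3 : ¬ mval n w (((x : ℕ) : ℤ) + 1) < ((t : ℕ) : ℤ) + 1 := hxt.2.1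
    have h4 : ¬ mval n w (((z : ℕ) : ℤ) + 1) < ((y : ℕ) : ℤ) + 1 := hyz.2.2
    omega
  · rintro ⟨x, y, z, t, hxy, hyz, hxt, hyt, hzt⟩
    have h1 : mval n w (((x : ℕ) : ℤ) + 1) < ((y : ℕ) : ℤ) + 1 := hxy
    have h2 : mval n w (((y : ℕ) : ℤ) + 1) < ((z : ℕ) : ℤ) + 1 := hyz
    have h3 : ¬ mval n w (((x : ℕ) : ℤ) + 1) < ((t : ℕ) : ℤ) + 1 := hxt.2.1
    have h4 : ¬ mval n w (((t : ℕ) : ℤ) + 1) < ((z : ℕ) : ℤ) + 1 := hzt.2.2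
    have hty : (t : ℕ) ≤ (y : ℕ) := by omega
    have := hmono t y hty
    omega
  · intro c hc x
    simp only [groundedF, Set.mem_setOf_eq] at hc
    simp only [qltF, not_lt]
    have := hgp x
    omega
  · intro c hc d hd
    simp only [groundedF, Set.mem_setOf_eq] at hc hd
    push_neg at hd
    have hcd : (c : ℕ) ≤ (d : ℕ) := by omega
    have hmcd := hmono c d hcd
    have hmc0 : 0 ≤ mval n w (((c : ℕ) : ℤ) + 1) := mval_nonneg _
    have hmd0 : 0 ≤ mval n w (((d : ℕ) : ℤ) + 1) := mval_nonneg _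
    have hmcn : mval n w (((c : ℕ) : ℤ) + 1) ≤ (n : ℤ) :=
      mval_le_n hw (by exact_mod_cast Nat.succ_le_of_lt c.isLt)
    have hmdn : mval n w (((d : ℕ) : ℤ) + 1) ≤ (n : ℤ) :=
      mval_le_n hw (by exact_mod_cast Nat.succ_le_of_lt d.isLt)
    have hUc := upset_ncard' hw c (hkey c)
    have hUd := upset_ncard' hw d (hkey d)
    have hDc : {x : Fin n | qltF n w x c ∨ x = c} = {c} := by
      ext x
      simp only [Set.mem_setOf_eq, Set.mem_singleton_iff]
      constructor
      · rintro (hx | hx)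
        · exfalso
          have h5 : mval n w (((x : ℕ) : ℤ) + 1) < ((c : ℕ) : ℤ) + 1 := hx
          have := hgp x
          omega
        · exact hx
      · intro hx; right; exact hx
    have hDd : 1 ≤ {x : Fin n | qltF n w x d ∨ x = d}.ncard := by
      have hsub : ({d} : Set (Fin n)) ⊆ {x : Fin n | qltF n w x d ∨ x = d} := by
        intro x hx; simp only [Set.mem_singleton_iff] at hx; right; exact hx
      have := Set.ncard_le_ncard hsub (Set.toFinite _)
      simpa using this
    rw [betaVal, betaVal, hUc, hUd, hDc, Set.ncard_singleton]
    omega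

end MvalLemmas

section Part2

open Finset

variable {n : ℕ}

lemma card_filter_equiv (e : Equiv (Fin n) (Fin n)) (P Q : Fin n → Prop)
    [DecidablePred P] [DecidablePred Q] (h : ∀ i, P i ↔ Q (e i)) :
    ((Finset.univ : Finset (Fin n)).filter P).card
      = ((Finset.univ : Finset (Fin n)).filter Q).card := by
  apply Finset.card_bij (fun a _ => e a)
  · intro a ha
    simp only [Finset.mem_filter, Finset.mem_univ, true_and] at ha ⊢
    exact (h a).mp ha
  · intro a _ b _ hab
    exact e.injective hab
  · intro b hb
    simp only [Finset.mem_filter, Finset.mem_univ, true_and] at hb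
    refine ⟨e.symm b, ?_, by simp⟩
    simp only [Finset.mem_filter, Finset.mem_univ, true_and]
    exact (h (e.symm b)).mpr (by simpa using hb)

lemma mono_eq_of_equiv {f g : Fin n → ℤ} (hf : ∀ i j : Fin n, i ≤ j → f i ≤ f j)
    (hg : ∀ i j : Fin n, i ≤ j → g i ≤ g j) (e : Equiv (Fin n) (Fin n))
    (h : ∀ i, g (e i) = f i) (i : Fin n) : f i = g i := by
  classical
  have hcard : ∀ c : ℤ, ((Finset.univ : Finset (Fin n)).filter (fun z => f z ≤ c)).card
      = ((Finset.univ : Finset (Fin n)).filter (fun z => g z ≤ c)).card := by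
    intro c
    exact card_filter_equiv e _ _ (fun a => by rw [h a])
  have hiff : ∀ c : ℤ, (f i ≤ c ↔ g i ≤ c) := by
    intro c
    have h1 := downclosed_mem_iff ((Finset.univ : Finset (Fin n)).filter (fun z => f z ≤ c))
      (by
        intro a b hab hb
        simp only [Finset.mem_filter, Finset.mem_univ, true_and] at hb ⊢
        exact le_trans (hf a b hab) hb) i
    have h2 := downclosed_mem_iff ((Finset.univ : Finset (Fin n)).filter (fun z => g z ≤ c))
      (by
        intro a b hab hb
        simp only [Finset.mem_filter, Finset.mem_univ, true_and] at hb ⊢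
        exact le_trans (hg a b hab) hb) i
    simp only [Finset.mem_filter, Finset.mem_univ, true_and] at h1 h2
    rw [h1, h2, hcard c]
  exact le_antisymm ((hiff (g i)).mpr le_rfl) ((hiff (f i)).mp le_rfl)

lemma mval_zero (w : Equiv.Perm ℤ) : mval n w 0 = negCount n w := by
  have : Finset.Icc (1 : ℤ) 0 = ∅ := by
    apply Finset.Icc_eq_empty; omega
  rw [mval]
  simp [this]

lemma mval_congr {v w : Equiv.Perm ℤ} (hp : negCount n v = negCount n w) {j : ℤ}
    (hpre : ∀ i, 1 ≤ i → i ≤ j → v i = w i) : mval n v j = mval n w j := by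
  have hs : insert ((negCount n v : ℤ)) ((Finset.Icc (1 : ℤ) j).image (fun i => v i))
      = insert ((negCount n w : ℤ)) ((Finset.Icc (1 : ℤ) j).image (fun i => w i)) := by
    rw [hp]
    congr 1
    apply Finset.image_congr
    intro x hx
    simp only [Finset.coe_Icc, Set.mem_Icc] at hx
    exact hpre x hx.1 hx.2
  apply le_antisymm
  · apply Finset.max'_le
    intro y hy
    have hy' : y ∈ insert ((negCount n w : ℤ)) ((Finset.Icc (1 : ℤ) j).image (fun i => w i)) := by
      rw [← hs]; exact hy
    exact Finset.le_max' _ _ hy'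
  · apply Finset.max'_le
    intro y hy
    have hy' : y ∈ insert ((negCount n v : ℤ)) ((Finset.Icc (1 : ℤ) j).image (fun i => v i)) := by
      rw [hs]; exact hy
    exact Finset.le_max' _ _ hy'

lemma record_val {w : Equiv.Perm ℤ} {j : ℤ} (h1 : 1 ≤ j)
    (hr : mval n w (j - 1) < mval n w j) : w j = mval n w j := by
  have hp : (negCount n w : ℤ) ≤ mval n w (j - 1) := mval_ge_p _
  obtain ⟨i, hi1, hij, hwi⟩ := mval_attained (n := n) (w := w) (j := j) (by omega)
  rcases eq_or_lt_of_le hij with h | h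
  · rw [h] at hwi; exact hwi
  · exfalso
    have := w_le_mval (n := n) (w := w) (j := j - 1) hi1 (by omega)
    omega

/-- Key lemma A : both positive, `v j < w j` is impossible. -/
lemma key_pos_pos {v w : Equiv.Perm ℤ} (hv : IsBn n v) (hva : AvoidsFive n v)
    (hw : IsBn n w) (hwa : AvoidsFive n w) (hp : negCount n v = negCount n w)
    {j : ℤ} (hj1 : 1 ≤ j) (hjn : j ≤ (n : ℤ))
    (hpre : ∀ i, 1 ≤ i → i < j → v i = w i)
    (hmj : mval n v j = mval n w j)
    (hnr : mval n v j ≤ mval n v (j - 1))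
    (hposv : 0 < v j) (hposw : 0 < w j) (hlt : v j < w j) : False := by
  have hmono := mval_mono (n := n) (w := v) (show j - 1 ≤ j by omega)
  have hnr' : mval n v j = mval n v (j - 1) := le_antisymm hnr hmono
  have hmw : mval n v (j - 1) = mval n w (j - 1) :=
    mval_congr hp (fun i h1 h2 => hpre i h1 (by omega))
  have hpwj : (negCount n w : ℤ) < w j := pos_gt_p hw hwa hj1 hjn hposw
  have hwjn : w j ≤ (n : ℤ) := by
    have := hw.abs_le hj1 hjn
    rcases abs_cases (w j) with ⟨h', _⟩ | ⟨h', _⟩ <;> omega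
  -- w j occurs in the window of v, at a position k > j
  obtain ⟨k, hk1, hkn, hvk⟩ := pos_mem_window hv hva (by omega) hwjn
  have hkj : j < k := by
    rcases lt_trichotomy k j with h | h | h
    · exfalso
      have := hpre k hk1 h
      have : w k = w j := by omega
      have := w.injective this
      omega
    · exfalso; rw [h] at hvk; omega
    · exact h
  -- w j < mval v (j-1)
  have hwle : w j ≤ mval n v (j - 1) := by
    have h1 := w_le_mval (n := n) (w := w) (i := j) (j := j) hj1 le_rfl
    omega
  have hstrict : w j < mval n v (j - 1) := by
    rcases eq_or_lt_of_le hwle with h | h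
    · exfalso
      obtain ⟨i, hi1, hij1, hwi⟩ := mval_attained (n := n) (w := w) (j := j - 1)
        (by rw [← hmw]; omega)
      have : w i = w j := by omega
      have := w.injective this
      omega
    · exact h
  obtain ⟨i, hi1, hij1, hvi⟩ := mval_attained (n := n) (w := v) (j := j - 1) (by omega)
  exact hva.2.2.2.1 ⟨i, j, k, hi1, by omega, hkj, hkn, hposv, by omega, by omega⟩

/-- Key lemma B : `v j` negative while `w j` positive is impossible. -/
lemma key_neg_pos {v w : Equiv.Perm ℤ} (hv : IsBn n v) (hva : AvoidsFive n v)
    (hw : IsBn n w) (hwa : AvoidsFive n w) (hp : negCount n v = negCount n w)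
    {j : ℤ} (hj1 : 1 ≤ j) (hjn : j ≤ (n : ℤ))
    (hpre : ∀ i, 1 ≤ i → i < j → v i = w i)
    (hmj : mval n v j = mval n w j)
    (hnr : mval n v j ≤ mval n v (j - 1))
    (hnegv : v j < 0) (hposw : 0 < w j) : False := by
  have hmono := mval_mono (n := n) (w := v) (show j - 1 ≤ j by omega)
  have hnr' : mval n v j = mval n v (j - 1) := le_antisymm hnr hmono
  have hmw : mval n v (j - 1) = mval n w (j - 1) :=
    mval_congr hp (fun i h1 h2 => hpre i h1 (by omega))
  have hpwj : (negCount n w : ℤ) < w j := pos_gt_p hw hwa hj1 hjn hposw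
  have hwjn : w j ≤ (n : ℤ) := by
    have := hw.abs_le hj1 hjn
    rcases abs_cases (w j) with ⟨h', _⟩ | ⟨h', _⟩ <;> omega
  obtain ⟨k, hk1, hkn, hvk⟩ := pos_mem_window hv hva (by omega) hwjn
  have hkj : j < k := by
    rcases lt_trichotomy k j with h | h | h
    · exfalso
      have := hpre k hk1 h
      have : w k = w j := by omega
      have := w.injective this
      omega
    · exfalso; rw [h] at hvk; omega
    · exact h
  have hwle : w j ≤ mval n v (j - 1) := by
    have h1 := w_le_mval (n := n) (w := w) (i := j) (j := j) hj1 le_rfl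
    omega
  have hstrict : w j < mval n v (j - 1) := by
    rcases eq_or_lt_of_le hwle with h | h
    · exfalso
      obtain ⟨i, hi1, hij1, hwi⟩ := mval_attained (n := n) (w := w) (j := j - 1)
        (by rw [← hmw]; omega)
      have : w i = w j := by omega
      have := w.injective this
      omega
    · exact h
  obtain ⟨i, hi1, hij1, hvi⟩ := mval_attained (n := n) (w := v) (j := j - 1) (by omega)
  have habs : -(v j) ≤ (negCount n v : ℤ) := neg_abs_le_p hv hva hj1 hjn hnegv
  exact hva.2.2.2.2 ⟨i, j, k, hi1, by omega, hkj, hkn, hnegv, by omega, by omega, by omega⟩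

end Part2

section Part2Main

open Finset

lemma card_grounded {n : ℕ} (w : Equiv.Perm ℤ) :
    ((Finset.univ : Finset (Fin n)).filter (fun i : Fin n => (i : ℕ) + 1 ≤ negCount n w)).card
      = negCount n w := by
  have h : ((Finset.univ : Finset (Fin n)).filter (fun i : Fin n => (i : ℕ) + 1 ≤ negCount n w))
      = (Finset.univ : Finset (Fin n)).filter (fun i : Fin n => (i : ℕ) < negCount n w) := by
    apply Finset.filter_congr
    intro x _
    constructor <;> omega
  rw [h, card_fin_lt n _ negCount_le_n]

theorem part2 (n : ℕ) (v w : Equiv.Perm ℤ) (hv : IsBn n v) (hva : AvoidsFive n v)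
    (hw : IsBn n w) (hwa : AvoidsFive n w)
    (hiso : BCIso n (qltF n v) (qltF n w) (groundedF n v) (groundedF n w)) : v = w := by
  classical
  obtain ⟨e, he1, he2⟩ := hiso
  have hp : negCount n v = negCount n w := by
    have h1 := card_filter_equiv e (fun i : Fin n => (i : ℕ) + 1 ≤ negCount n v)
      (fun i : Fin n => (i : ℕ) + 1 ≤ negCount n w)
      (fun i => by simpa [groundedF, Set.mem_setOf_eq] using he2 i)
    rwa [card_grounded, card_grounded] at h1
  have hm : ∀ i : Fin n, mval n v (((i : ℕ) : ℤ) + 1) = mval n w (((i : ℕ) : ℤ) + 1) := by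
    apply mono_eq_of_equiv
      (f := fun i : Fin n => mval n v (((i : ℕ) : ℤ) + 1))
      (g := fun i : Fin n => mval n w (((i : ℕ) : ℤ) + 1))
      (e := e)
    · intro i j hij
      have := Fin.le_def.mp hij
      exact mval_mono (by omega)
    · intro i j hij
      have := Fin.le_def.mp hij
      exact mval_mono (by omega)
    · intro i
      have hc := card_filter_equiv e (fun z => qltF n v i z) (fun z => qltF n w (e i) z)
        (fun z => he1 i z)
      have h1 : ((Finset.univ : Finset (Fin n)).filter (fun z => qltF n v i z)).card
          = n - (mval n v (((i : ℕ) : ℤ) + 1)).toNat := by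
        rw [← ncard_setOf_fin]; exact upset_ncard hv i
      have h2 : ((Finset.univ : Finset (Fin n)).filter (fun z => qltF n w (e i) z)).card
          = n - (mval n w ((((e i) : ℕ) : ℤ) + 1)).toNat := by
        rw [← ncard_setOf_fin]; exact upset_ncard hw (e i)
      have b1 : 0 ≤ mval n v (((i : ℕ) : ℤ) + 1) := mval_nonneg _
      have b2 : 0 ≤ mval n w ((((e i) : ℕ) : ℤ) + 1) := mval_nonneg _
      have b3 : mval n v (((i : ℕ) : ℤ) + 1) ≤ (n : ℤ) :=
        mval_le_n hv (by exact_mod_cast Nat.succ_le_of_lt i.isLt)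
      have b4 : mval n w ((((e i) : ℕ) : ℤ) + 1) ≤ (n : ℤ) :=
        mval_le_n hw (by exact_mod_cast Nat.succ_le_of_lt (e i).isLt)
      omega
  have hmZ : ∀ j : ℤ, 1 ≤ j → j ≤ (n : ℤ) → mval n v j = mval n w j := by
    intro j h1 h2
    have hn1 : (j - 1).toNat < n := by omega
    have hcast : (((⟨(j - 1).toNat, hn1⟩ : Fin n) : ℕ) : ℤ) + 1 = j := by
      simp only []
      omega
    have := hm ⟨(j - 1).toNat, hn1⟩
    rwa [hcast] at this
  have hwin : ∀ k : ℕ, ∀ j : ℤ, 1 ≤ j → j ≤ (n : ℤ) → j ≤ (k : ℤ) → v j = w j := by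
    intro k
    induction k with
    | zero => intro j h1 _ h3; exact absurd h3 (by omega)
    | succ k IH =>
      intro j h1 h2 h3
      by_cases hk : j ≤ (k : ℤ)
      · exact IH j h1 h2 hk
      · have hpre : ∀ i, 1 ≤ i → i < j → v i = w i := fun i hi1 hi2 =>
          IH i hi1 (by omega) (by omega)
        have hmj : mval n v j = mval n w j := hmZ j h1 h2
        have hmj1 : mval n v (j - 1) = mval n w (j - 1) :=
          mval_congr hp (fun i a b => hpre i a (by omega))
        by_cases hrec : mval n v (j - 1) < mval n v j
        · have e1 : v j = mval n v j := record_val h1 hrec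
          have e2 : w j = mval n w j := record_val h1 (by omega)
          omega
        · push_neg at hrec
          have hvne := hv.ne0 h1
          have hwne := hw.ne0 h1
          rcases lt_trichotomy (v j) 0 with hvneg | h0 | hvpos
          · rcases lt_trichotomy (w j) 0 with hwneg | h0' | hwpos
            · have o1 := neg_order hv hva h1 h2 hvneg
              have o2 := neg_order hw hwa h1 h2 hwneg
              have hcnt : ((Finset.Icc (1 : ℤ) (j - 1)).filter (fun i => v i < 0)).card
                  = ((Finset.Icc (1 : ℤ) (j - 1)).filter (fun i => w i < 0)).card := by
                congr 1
                apply Finset.filter_congr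
                intro x hx
                simp only [Finset.mem_Icc] at hx
                rw [hpre x hx.1 (by omega)]
              omega
            · exact absurd h0' hwne
            · exact (key_neg_pos hv hva hw hwa hp h1 h2 hpre hmj hrec hvneg hwpos).elim
          · exact absurd h0 hvne
          · rcases lt_trichotomy (w j) 0 with hwneg | h0' | hwpos
            · exact (key_neg_pos hw hwa hv hva hp.symm h1 h2
                (fun i a b => (hpre i a b).symm) hmj.symm (by omega) hwneg hvpos).elim
            · exact absurd h0' hwne
            · rcases lt_trichotomy (v j) (w j) with hlt | heq | hgt
              · exact (key_pos_pos hv hva hw hwa hp h1 h2 hpre hmj hrec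
                  hvpos hwpos hlt).elim
              · exact heq
              · exact (key_pos_pos hw hwa hv hva hp.symm h1 h2
                  (fun i a b => (hpre i a b).symm) hmj.symm (by omega) hwpos hvpos hgt).elim
  apply Equiv.ext
  intro i
  by_cases hpos : 1 ≤ i ∧ i ≤ (n : ℤ)
  · exact hwin n i hpos.1 hpos.2 hpos.2
  · by_cases hneg : 1 ≤ -i ∧ -i ≤ (n : ℤ)
    · have h1 := hv.1 (-i)
      have h2 := hw.1 (-i)
      simp only [neg_neg] at h1 h2
      rw [h1, h2, hwin n (-i) hneg.1 hneg.2 hneg.2]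
    · by_cases hz : i = 0
      · rw [hz, hv.w0, hw.w0]
      · have habs : (n : ℤ) < |i| := by
          rcases abs_cases i with ⟨h, _⟩ | ⟨h, _⟩ <;> omega
        rw [hv.2 i habs, hw.2 i habs]

end Part2Main

section Greedy

open Finset

/-- number of negative entries of a list. -/
def negc (L : List ℤ) : ℕ := L.countP (fun v => decide (v < 0))

/-- available positive values. -/
noncomputable def avail (p : ℕ) (L : List ℤ) (cur : ℤ) : Finset ℤ :=
  (Finset.Ioo (p : ℤ) cur).filter (fun v => v ∉ L)

/-- the greedy choice. -/
noncomputable def pick (p : ℕ) (L : List ℤ) (prev cur : ℤ) : ℤ :=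
  if prev < cur then cur
  else if h : (avail p L cur).Nonempty then (avail p L cur).max' h
  else -((negc L : ℤ) + 1)

/-- the greedy window, as a list. -/
noncomputable def bld (p : ℕ) (M : ℕ → ℤ) : ℕ → List ℤ
  | 0 => []
  | j + 1 => bld p M j ++ [pick p (bld p M j) (M j) (M (j + 1))]

noncomputable def win (p : ℕ) (M : ℕ → ℤ) (j : ℕ) : ℤ := pick p (bld p M (j - 1)) (M (j - 1)) (M j)

lemma bld_succ (p : ℕ) (M : ℕ → ℤ) (j : ℕ) :
    bld p M (j + 1) = bld p M j ++ [win p M (j + 1)] := rfl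

lemma bld_decomp (p : ℕ) (M : ℕ → ℤ) {j : ℕ} (hj : 1 ≤ j) :
    bld p M j = bld p M (j - 1) ++ [win p M j] := by
  cases j with
  | zero => omega
  | succ k => rfl

lemma bld_length (p : ℕ) (M : ℕ → ℤ) (j : ℕ) : (bld p M j).length = j := by
  induction j with
  | zero => rfl
  | succ j IH => rw [bld_succ, List.length_append, IH]; rfl

lemma mem_bld_iff (p : ℕ) (M : ℕ → ℤ) {v : ℤ} {j : ℕ} :
    v ∈ bld p M j ↔ ∃ i, 1 ≤ i ∧ i ≤ j ∧ win p M i = v := by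
  induction j with
  | zero =>
    simp only [bld, List.not_mem_nil, false_iff]
    rintro ⟨i, h1, h2, _⟩; omega
  | succ j IH =>
    rw [bld_succ, List.mem_append, List.mem_singleton, IH]
    constructor
    · rintro (⟨i, h1, h2, h3⟩ | h)
      · exact ⟨i, h1, by omega, h3⟩
      · exact ⟨j + 1, by omega, le_rfl, h.symm⟩
    · rintro ⟨i, h1, h2, h3⟩
      rcases eq_or_lt_of_le h2 with h | h
      · right; rw [← h3, h]
      · left; exact ⟨i, h1, by omega, h3⟩

lemma negc_append (L : List ℤ) (a : ℤ) :
    negc (L ++ [a]) = negc L + (if a < 0 then 1 else 0) := by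
  rw [negc, List.countP_append, negc]
  congr 1
  by_cases h : a < 0 <;> simp [List.countP_singleton, h]

lemma win_succ_eq (p : ℕ) (M : ℕ → ℤ) (j : ℕ) :
    win p M (j + 1) = pick p (bld p M j) (M j) (M (j + 1)) := rfl

/-- The main invariant of the greedy construction. -/
lemma bld_inv (n p : ℕ) (M : ℕ → ℤ) (hM0 : M 0 = (p : ℤ)) (hmono : Monotone M)
    (hge : ∀ j, 1 ≤ j → j ≤ n → (j : ℤ) ≤ M j) :
    ∀ j, j ≤ n →
    (bld p M j).Nodup ∧
    (∀ v ∈ bld p M j, ((p : ℤ) < v ∧ v ≤ M j) ∨ (-(p : ℤ) ≤ v ∧ v < 0)) ∧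
    ((p : ℤ) < M j → (M j) ∈ bld p M j) ∧
    (∀ v ∈ bld p M j, v < 0 → -v ≤ (negc (bld p M j) : ℤ)) := by
  intro j hj
  induction j with
  | zero =>
    refine ⟨List.nodup_nil, by simp [bld], ?_, by simp [bld]⟩
    rw [hM0]; intro h; omega
  | succ j IH =>
    obtain ⟨hnd, hmem, hatt, hcnt⟩ := IH (by omega)
    have hpM : (p : ℤ) ≤ M j := hM0 ▸ hmono (Nat.zero_le j)
    have hMM : M j ≤ M (j + 1) := hmono (by omega)
    set a := pick p (bld p M j) (M j) (M (j + 1)) with ha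
    have hbs : bld p M (j + 1) = bld p M j ++ [a] := rfl
    by_cases hrec : M j < M (j + 1)
    · -- record step
      have hav : a = M (j + 1) := by rw [ha, pick, if_pos hrec]
      have hnotmem : a ∉ bld p M j := by
        intro h
        rcases hmem a h with ⟨h1, h2⟩ | ⟨h1, h2⟩ <;> omega
      have hnd' : (bld p M (j + 1)).Nodup := by
        rw [hbs, List.nodup_append]
        exact ⟨hnd, List.nodup_singleton a, by
          intro x hx
          simp only [List.mem_singleton]
          intro b hb hxb
          subst hb; subst hxb; exact hnotmem hx⟩
      refine ⟨hnd', ?_, ?_, ?_⟩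
      · intro v hv
        rw [hbs, List.mem_append, List.mem_singleton] at hv
        rcases hv with hv | hv
        · rcases hmem v hv with ⟨h1, h2⟩ | ⟨h1, h2⟩
          · left; exact ⟨h1, by omega⟩
          · right; exact ⟨h1, h2⟩
        · left; rw [hv, hav]; exact ⟨by omega, le_rfl⟩
      · intro _
        rw [hbs, List.mem_append, List.mem_singleton]
        right; omega
      · intro v hv hvneg
        rw [hbs, List.mem_append, List.mem_singleton] at hv
        rw [hbs, negc_append, if_neg (by omega)]
        rcases hv with hv | hv
        · have := hcnt v hv hvneg; omega
        · rw [hv, hav] at hvneg; omega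
    · -- non-record step
      have hMeq : M (j + 1) = M j := le_antisymm (not_lt.mp hrec) hMM
      by_cases hne : (avail p (bld p M j) (M (j + 1))).Nonempty
      · -- positive pick
        have hav : a = (avail p (bld p M j) (M (j + 1))).max' hne := by
          rw [ha, pick, if_neg hrec, dif_pos hne]
        have hmax := Finset.max'_mem _ hne
        rw [← hav] at hmax
        simp only [avail, Finset.mem_filter, Finset.mem_Ioo] at hmax
        obtain ⟨⟨hap, hacur⟩, hanotmem⟩ := hmax
        have hnd' : (bld p M (j + 1)).Nodup := by
          rw [hbs, List.nodup_append]
          exact ⟨hnd, List.nodup_singleton a, by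
            intro x hx
            simp only [List.mem_singleton]
            intro b hb hxb
            subst hb; subst hxb; exact hanotmem hx⟩
        refine ⟨hnd', ?_, ?_, ?_⟩
        · intro v hv
          rw [hbs, List.mem_append, List.mem_singleton] at hv
          rcases hv with hv | hv
          · rcases hmem v hv with ⟨h1, h2⟩ | ⟨h1, h2⟩
            · left; exact ⟨h1, by omega⟩
            · right; exact ⟨h1, h2⟩
          · left; rw [hv]; exact ⟨hap, by omega⟩
        · intro h
          rw [hbs, List.mem_append]
          left
          rw [hMeq] at h ⊢
          exact hatt h
        · intro v hv hvneg
          rw [hbs, List.mem_append, List.mem_singleton] at hv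
          rw [hbs, negc_append, if_neg (by omega)]
          rcases hv with hv | hv
          · have := hcnt v hv hvneg; omega
          · rw [hv] at hvneg; omega
      · -- negative pick
        have hav : a = -((negc (bld p M j) : ℤ) + 1) := by
          rw [ha, pick, if_neg hrec, dif_neg hne]
        -- counting : the positive entries are exactly Ioc p (M j)
        have hTF : ((bld p M j).toFinset.filter (fun v => 0 < v)) = Finset.Ioc (p : ℤ) (M j) := by
          apply Finset.Subset.antisymm
          · intro v hv
            simp only [Finset.mem_filter, List.mem_toFinset] at hv
            rcases hmem v hv.1 with ⟨h1, h2⟩ | ⟨h1, h2⟩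
            · simp only [Finset.mem_Ioc]; exact ⟨h1, h2⟩
            · omega
          · intro v hv
            simp only [Finset.mem_Ioc] at hv
            simp only [Finset.mem_filter, List.mem_toFinset]
            rcases eq_or_lt_of_le hv.2 with h | h
            · exact ⟨h ▸ hatt (by omega), by omega⟩
            · have : v ∈ bld p M j := by
                by_contra hnm
                have : v ∈ avail p (bld p M j) (M (j + 1)) := by
                  simp only [avail, Finset.mem_filter, Finset.mem_Ioo]
                  exact ⟨⟨hv.1, by omega⟩, hnm⟩
                exact hne ⟨v, this⟩
              exact ⟨this, by omega⟩
        have hcardT : ((bld p M j).toFinset.filter (fun v => 0 < v)).card = (M j - p).toNat := by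
          rw [hTF, Int.card_Ioc]
        have hcardtot : (bld p M j).toFinset.card = j := by
          rw [List.toFinset_card_of_nodup hnd, bld_length]
        have hnegcard : (negc (bld p M j) : ℕ)
            = ((bld p M j).toFinset.filter (fun v => v < 0)).card := by
          rw [negc, List.countP_eq_length_filter]
          have hft : ((bld p M j).filter (fun v => decide (v < 0))).toFinset
              = (bld p M j).toFinset.filter (fun v => v < 0) := by
            ext x
            simp [List.mem_filter]
          rw [← hft, List.toFinset_card_of_nodup (hnd.filter _)]
        have hsplit := Finset.card_filter_add_card_filter_not
          (s := (bld p M j).toFinset) (p := fun v => 0 < v)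
        have hnegf : ((bld p M j).toFinset.filter (fun v => ¬ 0 < v))
            = (bld p M j).toFinset.filter (fun v => v < 0) := by
          apply Finset.filter_congr
          intro v hv
          simp only [List.mem_toFinset] at hv
          rcases hmem v hv with ⟨h1, _⟩ | ⟨_, h2⟩
          · constructor <;> intro <;> omega
          · constructor <;> intro <;> omega
        rw [hnegf, hcardT, hcardtot, ← hnegcard] at hsplit
        have hjm : (j : ℤ) + 1 ≤ M (j + 1) := hge (j + 1) (by omega) hj
        have hnegle : (negc (bld p M j) : ℤ) + 1 ≤ (p : ℤ) := by omega
        have hanotmem : a ∉ bld p M j := by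
          intro h
          have := hcnt a h (by omega)
          omega
        have hnd' : (bld p M (j + 1)).Nodup := by
          rw [hbs, List.nodup_append]
          exact ⟨hnd, List.nodup_singleton a, by
            intro x hx
            simp only [List.mem_singleton]
            intro b hb hxb
            subst hb; subst hxb; exact hanotmem hx⟩
        refine ⟨hnd', ?_, ?_, ?_⟩
        · intro v hv
          rw [hbs, List.mem_append, List.mem_singleton] at hv
          rcases hv with hv | hv
          · rcases hmem v hv with ⟨h1, h2⟩ | ⟨h1, h2⟩
            · left; exact ⟨h1, by omega⟩
            · right; exact ⟨h1, h2⟩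
          · right; rw [hv, hav]; omega
        · intro h
          rw [hbs, List.mem_append]
          left
          rw [hMeq] at h ⊢
          exact hatt h
        · intro v hv hvneg
          rw [hbs, List.mem_append, List.mem_singleton] at hv
          rw [hbs, negc_append, if_pos (by omega)]
          rcases hv with hv | hv
          · have := hcnt v hv hvneg; push_cast; omega
          · rw [hv, hav]; push_cast; omega

end Greedy

section GreedyFacts

open Finset

variable {n p : ℕ} {M : ℕ → ℤ}

lemma win_mem {i j : ℕ} (hi1 : 1 ≤ i) (hij : i ≤ j) : win p M i ∈ bld p M j :=
  (mem_bld_iff p M).mpr ⟨i, hi1, hij, rfl⟩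

lemma win_notmem_earlier (hM0 : M 0 = (p : ℤ)) (hmono : Monotone M)
    (hge : ∀ j, 1 ≤ j → j ≤ n → (j : ℤ) ≤ M j) {j : ℕ} (h1 : 1 ≤ j) (hj : j ≤ n) :
    win p M j ∉ bld p M (j - 1) := by
  have hnd := (bld_inv n p M hM0 hmono hge j hj).1
  rw [bld_decomp p M h1, List.nodup_append] at hnd
  intro hmem
  exact hnd.2.2 _ hmem _ (List.mem_singleton_self _) rfl

lemma win_inj (hM0 : M 0 = (p : ℤ)) (hmono : Monotone M)
    (hge : ∀ j, 1 ≤ j → j ≤ n → (j : ℤ) ≤ M j) {i k : ℕ}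
    (hi1 : 1 ≤ i) (hin : i ≤ n) (hk1 : 1 ≤ k) (hkn : k ≤ n) (hik : i ≠ k) :
    win p M i ≠ win p M k := by
  have key : ∀ a b : ℕ, 1 ≤ a → b ≤ n → a < b → win p M a ≠ win p M b := by
    intro a b ha1 hbn hab heq
    have h1 : win p M a ∈ bld p M (b - 1) := win_mem ha1 (by omega)
    have h2 := win_notmem_earlier hM0 hmono hge (by omega : 1 ≤ b) hbn
    rw [heq] at h1
    exact h2 h1
  rcases lt_or_gt_of_ne hik with h | h
  · exact key i k hi1 hkn h
  · exact fun heq => key k i hk1 hin h heq.symm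

lemma win_spec (hM0 : M 0 = (p : ℤ)) (hmono : Monotone M)
    (hge : ∀ j, 1 ≤ j → j ≤ n → (j : ℤ) ≤ M j) {i : ℕ} (hi1 : 1 ≤ i) (hin : i ≤ n) :
    ((p : ℤ) < win p M i ∧ win p M i ≤ M i) ∨ (-(p : ℤ) ≤ win p M i ∧ win p M i < 0) :=
  (bld_inv n p M hM0 hmono hge i hin).2.1 _ (win_mem hi1 le_rfl)

lemma win_cases {j : ℕ} (h1 : 1 ≤ j) :
    (M (j - 1) < M j ∧ win p M j = M j) ∨
    (M j ≤ M (j - 1) ∧ (p : ℤ) < win p M j ∧ win p M j < M j ∧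
      win p M j ∉ bld p M (j - 1) ∧
      ∀ v, (p : ℤ) < v → v < M j → v ∉ bld p M (j - 1) → v ≤ win p M j) ∨
    (M j ≤ M (j - 1) ∧ win p M j < 0 ∧
      ∀ v, (p : ℤ) < v → v < M j → v ∈ bld p M (j - 1)) := by
  by_cases hrec : M (j - 1) < M j
  · left
    exact ⟨hrec, by rw [win, pick, if_pos hrec]⟩
  · right
    by_cases hne : (avail p (bld p M (j - 1)) (M j)).Nonempty
    · left
      have hwin : win p M j = (avail p (bld p M (j - 1)) (M j)).max' hne := by
        rw [win, pick, if_neg hrec, dif_pos hne]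
      have hmax := Finset.max'_mem _ hne
      rw [← hwin] at hmax
      simp only [avail, Finset.mem_filter, Finset.mem_Ioo] at hmax
      refine ⟨not_lt.mp hrec, hmax.1.1, hmax.1.2, hmax.2, ?_⟩
      intro v hv1 hv2 hv3
      rw [hwin]
      apply Finset.le_max'
      simp only [avail, Finset.mem_filter, Finset.mem_Ioo]
      exact ⟨⟨hv1, hv2⟩, hv3⟩
    · right
      have hwin : win p M j = -((negc (bld p M (j - 1)) : ℤ) + 1) := by
        rw [win, pick, if_neg hrec, dif_neg hne]
      refine ⟨not_lt.mp hrec, by rw [hwin]; omega, ?_⟩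
      intro v hv1 hv2
      by_contra hnm
      apply hne
      exact ⟨v, by simp only [avail, Finset.mem_filter, Finset.mem_Ioo]; exact ⟨⟨hv1, hv2⟩, hnm⟩⟩

lemma win_neg_val (hM0 : M 0 = (p : ℤ)) (hmono : Monotone M)
    {j : ℕ} (h1 : 1 ≤ j) (hneg : win p M j < 0) :
    win p M j = -((negc (bld p M (j - 1)) : ℤ) + 1) ∧
    M j ≤ M (j - 1) ∧ (∀ v, (p : ℤ) < v → v < M j → v ∈ bld p M (j - 1)) := by
  have hpM : (p : ℤ) ≤ M (j - 1) := hM0 ▸ hmono (Nat.zero_le _)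
  rcases win_cases (p := p) (M := M) h1 with ⟨h, hv⟩ | ⟨h, hv, _⟩ | ⟨h, hv, hall⟩
  · exfalso
    have hp0 : (0 : ℤ) ≤ (p : ℤ) := by positivity
    omega
  · exfalso; omega
  · refine ⟨?_, h, hall⟩
    by_cases hne : (avail p (bld p M (j - 1)) (M j)).Nonempty
    · exfalso
      obtain ⟨v, hv'⟩ := hne
      simp only [avail, Finset.mem_filter, Finset.mem_Ioo] at hv'
      exact hv'.2 (hall v hv'.1.1 hv'.1.2)
    · rw [win, pick, if_neg (by omega), dif_neg hne]

end GreedyFacts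

section GreedyPerm

open Finset

variable {n p : ℕ} {M : ℕ → ℤ}

lemma negc_eq_card {L : List ℤ} (h : L.Nodup) :
    negc L = (L.toFinset.filter (fun v => v < 0)).card := by
  rw [negc, List.countP_eq_length_filter]
  have hft : (L.filter (fun v => decide (v < 0))).toFinset
      = L.toFinset.filter (fun v => v < 0) := by
    ext x; simp [List.mem_filter]
  rw [← hft, List.toFinset_card_of_nodup (h.filter _)]

lemma negc_final (hM0 : M 0 = (p : ℤ)) (hmono : Monotone M)
    (hge : ∀ j, 1 ≤ j → j ≤ n → (j : ℤ) ≤ M j) (hle : ∀ j, j ≤ n → M j ≤ (n : ℤ)) :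
    negc (bld p M n) = p := by
  obtain ⟨hnd, hmem, -, -⟩ := bld_inv n p M hM0 hmono hge n le_rfl
  have hple : (p : ℤ) ≤ (n : ℤ) := by
    have h1 : M 0 ≤ M n := hmono (Nat.zero_le n)
    have h2 := hle n le_rfl
    omega
  have htot : (bld p M n).toFinset.card = n := by
    rw [List.toFinset_card_of_nodup hnd, bld_length]
  have hpos : (bld p M n).toFinset.filter (fun v => 0 < v) ⊆ Finset.Ioc (p : ℤ) (n : ℤ) := by
    intro v hv
    simp only [Finset.mem_filter, List.mem_toFinset] at hv
    rcases hmem v hv.1 with ⟨h1, h2⟩ | ⟨h1, h2⟩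
    · simp only [Finset.mem_Ioc]
      exact ⟨h1, h2.trans (hle n le_rfl)⟩
    · omega
  have hposcard : ((bld p M n).toFinset.filter (fun v => 0 < v)).card ≤ ((n : ℤ) - p).toNat := by
    have := Finset.card_le_card hpos
    rwa [Int.card_Ioc] at this
  have hneg : (bld p M n).toFinset.filter (fun v => v < 0) ⊆ Finset.Icc (-(p : ℤ)) (-1) := by
    intro v hv
    simp only [Finset.mem_filter, List.mem_toFinset] at hv
    rcases hmem v hv.1 with ⟨h1, _⟩ | ⟨h1, h2⟩
    · omega
    · simp only [Finset.mem_Icc]; omega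
  have hnegcard : ((bld p M n).toFinset.filter (fun v => v < 0)).card ≤ p := by
    have := Finset.card_le_card hneg
    rw [Int.card_Icc] at this
    omega
  have hsplit := Finset.card_filter_add_card_filter_not
    (s := (bld p M n).toFinset) (p := fun v => 0 < v)
  have hnegf : ((bld p M n).toFinset.filter (fun v => ¬ 0 < v))
      = (bld p M n).toFinset.filter (fun v => v < 0) := by
    apply Finset.filter_congr
    intro v hv
    simp only [List.mem_toFinset] at hv
    rcases hmem v hv with ⟨h1, _⟩ | ⟨_, h2⟩
    · constructor <;> intro <;> omega
    · constructor <;> intro <;> omega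
  rw [hnegf, htot] at hsplit
  rw [negc_eq_card hnd]
  omega

lemma negc_mono_bld (i j : ℕ) (hij : i ≤ j) : negc (bld p M i) ≤ negc (bld p M j) := by
  induction j with
  | zero =>
    have : i = 0 := by omega
    rw [this]
  | succ j IH =>
    rcases Nat.lt_or_ge i (j + 1) with h | h
    · have := IH (by omega)
      rw [bld_succ, negc_append]
      split <;> omega
    · have : i = j + 1 := by omega
      rw [this]

/-- the permutation of `ℤ` determined by the greedy window. -/
noncomputable def winperm (n p : ℕ) (M : ℕ → ℤ) : ℤ → ℤ := fun i =>
  if 1 ≤ i ∧ i ≤ (n : ℤ) then win p M i.toNat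
  else if 1 ≤ -i ∧ -i ≤ (n : ℤ) then -(win p M (-i).toNat)
  else i

lemma winperm_pos {i : ℤ} (h1 : 1 ≤ i) (h2 : i ≤ (n : ℤ)) :
    winperm n p M i = win p M i.toNat := by
  rw [winperm, if_pos ⟨h1, h2⟩]

lemma winperm_neg {i : ℤ} (h1 : 1 ≤ -i) (h2 : -i ≤ (n : ℤ)) :
    winperm n p M i = -(win p M (-i).toNat) := by
  rw [winperm, if_neg (by omega), if_pos ⟨h1, h2⟩]

lemma winperm_other {i : ℤ} (h1 : ¬ (1 ≤ i ∧ i ≤ (n : ℤ))) (h2 : ¬ (1 ≤ -i ∧ -i ≤ (n : ℤ))) :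
    winperm n p M i = i := by
  rw [winperm, if_neg h1, if_neg h2]

variable (hM0 : M 0 = (p : ℤ)) (hmono : Monotone M)
  (hge : ∀ j, 1 ≤ j → j ≤ n → (j : ℤ) ≤ M j) (hle : ∀ j, j ≤ n → M j ≤ (n : ℤ))

include hM0 hmono hge hle

lemma win_abs_bound {i : ℕ} (h1 : 1 ≤ i) (h2 : i ≤ n) :
    1 ≤ |win p M i| ∧ |win p M i| ≤ (n : ℤ) := by
  have hple : (p : ℤ) ≤ (n : ℤ) := by
    have h0 : M 0 ≤ M n := hmono (Nat.zero_le n)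
    have := hle n le_rfl
    omega
  rcases win_spec hM0 hmono hge h1 h2 with ⟨ha, hb⟩ | ⟨ha, hb⟩
  · have := hle i h2
    rcases abs_cases (win p M i) with ⟨h, _⟩ | ⟨h, _⟩ <;> omega
  · rcases abs_cases (win p M i) with ⟨h, _⟩ | ⟨h, _⟩ <;> omega

lemma win_ne_neg {a b : ℕ} (ha1 : 1 ≤ a) (han : a ≤ n) (hb1 : 1 ≤ b) (hbn : b ≤ n) :
    win p M a ≠ -(win p M b) := by
  intro h
  rcases win_spec hM0 hmono hge ha1 han with ⟨h1, h2⟩ | ⟨h1, h2⟩ <;>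
    rcases win_spec hM0 hmono hge hb1 hbn with ⟨h3, h4⟩ | ⟨h3, h4⟩ <;> omega

lemma win_abs_surj {v : ℤ} (h1 : 1 ≤ v) (h2 : v ≤ (n : ℤ)) :
    ∃ i : ℕ, 1 ≤ i ∧ i ≤ n ∧ (win p M i = v ∨ win p M i = -v) := by
  classical
  set A := (Finset.Icc 1 n).image (fun i : ℕ => |win p M i|) with hA
  have hsub : A ⊆ Finset.Icc (1 : ℤ) (n : ℤ) := by
    intro x hx
    simp only [hA, Finset.mem_image, Finset.mem_Icc] at hx
    obtain ⟨i, ⟨hi1, hi2⟩, rfl⟩ := hx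
    have := win_abs_bound hM0 hmono hge hle hi1 hi2
    simp only [Finset.mem_Icc]
    exact this
  have hcard : A.card = n := by
    rw [hA, Finset.card_image_of_injOn, Nat.card_Icc]
    · omega
    · intro a ha b hb hab
      simp only [Finset.coe_Icc, Set.mem_Icc] at ha hb
      by_contra hne
      rcases abs_eq_abs.mp hab with h | h
      · exact win_inj hM0 hmono hge ha.1 ha.2 hb.1 hb.2 hne h
      · exact win_ne_neg hM0 hmono hge hle ha.1 ha.2 hb.1 hb.2 h
  have hAeq : A = Finset.Icc (1 : ℤ) (n : ℤ) := by
    apply Finset.eq_of_subset_of_card_le hsub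
    rw [hcard, Int.card_Icc]
    omega
  have hv : v ∈ A := by rw [hAeq]; simp only [Finset.mem_Icc]; exact ⟨h1, h2⟩
  simp only [hA, Finset.mem_image, Finset.mem_Icc] at hv
  obtain ⟨i, ⟨hi1, hi2⟩, habs⟩ := hv
  refine ⟨i, hi1, hi2, ?_⟩
  rcases abs_cases (win p M i) with ⟨h, _⟩ | ⟨h, _⟩ <;> omega

lemma winperm_bijective : Function.Bijective (winperm n p M) := by
  constructor
  · intro x y hxy
    by_cases hx1 : 1 ≤ x ∧ x ≤ (n : ℤ)
    · rw [winperm_pos hx1.1 hx1.2] at hxy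
      by_cases hy1 : 1 ≤ y ∧ y ≤ (n : ℤ)
      · rw [winperm_pos hy1.1 hy1.2] at hxy
        by_contra hne
        exact win_inj hM0 hmono hge (by omega) (by omega) (by omega) (by omega)
          (by omega) hxy
      · by_cases hy2 : 1 ≤ -y ∧ -y ≤ (n : ℤ)
        · rw [winperm_neg hy2.1 hy2.2] at hxy
          exact absurd hxy (win_ne_neg hM0 hmono hge hle (by omega) (by omega)
            (by omega) (by omega))
        · rw [winperm_other hy1 hy2] at hxy
          have := win_abs_bound hM0 hmono hge hle
            (show 1 ≤ x.toNat by omega) (show x.toNat ≤ n by omega)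
          rw [hxy] at this
          exfalso
          rcases abs_cases y with ⟨h, _⟩ | ⟨h, _⟩ <;> omega
    · by_cases hx2 : 1 ≤ -x ∧ -x ≤ (n : ℤ)
      · rw [winperm_neg hx2.1 hx2.2] at hxy
        by_cases hy1 : 1 ≤ y ∧ y ≤ (n : ℤ)
        · rw [winperm_pos hy1.1 hy1.2] at hxy
          exact absurd hxy.symm (win_ne_neg hM0 hmono hge hle (by omega) (by omega)
            (by omega) (by omega))
        · by_cases hy2 : 1 ≤ -y ∧ -y ≤ (n : ℤ)
          · rw [winperm_neg hy2.1 hy2.2] at hxy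
            have hxy' : win p M (-x).toNat = win p M (-y).toNat := by omega
            by_contra hne
            exact win_inj hM0 hmono hge (show 1 ≤ (-x).toNat by omega)
              (show (-x).toNat ≤ n by omega) (show 1 ≤ (-y).toNat by omega)
              (show (-y).toNat ≤ n by omega) (by omega) hxy'
          · rw [winperm_other hy1 hy2] at hxy
            have := win_abs_bound hM0 hmono hge hle
              (show 1 ≤ (-x).toNat by omega) (show (-x).toNat ≤ n by omega)
            exfalso
            rcases abs_cases (win p M (-x).toNat) with ⟨h, _⟩ | ⟨h, _⟩ <;>
              rcases abs_cases y with ⟨h', _⟩ | ⟨h', _⟩ <;> omega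
      · rw [winperm_other hx1 hx2] at hxy
        by_cases hy1 : 1 ≤ y ∧ y ≤ (n : ℤ)
        · rw [winperm_pos hy1.1 hy1.2] at hxy
          have := win_abs_bound hM0 hmono hge hle
            (show 1 ≤ y.toNat by omega) (show y.toNat ≤ n by omega)
          exfalso
          rcases abs_cases (win p M y.toNat) with ⟨h, _⟩ | ⟨h, _⟩ <;> omega
        · by_cases hy2 : 1 ≤ -y ∧ -y ≤ (n : ℤ)
          · rw [winperm_neg hy2.1 hy2.2] at hxy
            have := win_abs_bound hM0 hmono hge hle
              (show 1 ≤ (-y).toNat by omega) (show (-y).toNat ≤ n by omega)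
            exfalso
            rcases abs_cases (win p M (-y).toNat) with ⟨h, _⟩ | ⟨h, _⟩ <;> omega
          · rw [winperm_other hy1 hy2] at hxy
            exact hxy
  · intro v
    by_cases hv1 : 1 ≤ v ∧ v ≤ (n : ℤ)
    · obtain ⟨i, hi1, hi2, hcase⟩ := win_abs_surj hM0 hmono hge hle hv1.1 hv1.2
      rcases hcase with h | h
      · refine ⟨(i : ℤ), ?_⟩
        rw [winperm_pos (by omega) (by omega)]
        simpa using h
      · refine ⟨-(i : ℤ), ?_⟩
        rw [winperm_neg (by omega) (by omega)]
        simp only [neg_neg, Int.toNat_natCast]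
        omega
    · by_cases hv2 : 1 ≤ -v ∧ -v ≤ (n : ℤ)
      · obtain ⟨i, hi1, hi2, hcase⟩ := win_abs_surj hM0 hmono hge hle hv2.1 hv2.2
        rcases hcase with h | h
        · refine ⟨-(i : ℤ), ?_⟩
          rw [winperm_neg (by omega) (by omega)]
          simp only [neg_neg, Int.toNat_natCast]
          omega
        · refine ⟨(i : ℤ), ?_⟩
          rw [winperm_pos (by omega) (by omega)]
          simp only [Int.toNat_natCast]
          omega
      · exact ⟨v, winperm_other hv1 hv2⟩

/-- the greedy permutation as an `Equiv.Perm ℤ`. -/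
noncomputable def buildPerm (n p : ℕ) (M : ℕ → ℤ) (hM0 : M 0 = (p : ℤ)) (hmono : Monotone M)
    (hge : ∀ j, 1 ≤ j → j ≤ n → (j : ℤ) ≤ M j) (hle : ∀ j, j ≤ n → M j ≤ (n : ℤ)) :
    Equiv.Perm ℤ :=
  Equiv.ofBijective _ (winperm_bijective hM0 hmono hge hle)

lemma buildPerm_apply (i : ℤ) : buildPerm n p M hM0 hmono hge hle i = winperm n p M i := rfl

lemma buildPerm_isBn : IsBn n (buildPerm n p M hM0 hmono hge hle) := by
  constructor
  · intro i
    rw [buildPerm_apply, buildPerm_apply]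
    by_cases h1 : 1 ≤ i ∧ i ≤ (n : ℤ)
    · rw [winperm_pos h1.1 h1.2, winperm_neg (by omega) (by omega), neg_neg]
    · by_cases h2 : 1 ≤ -i ∧ -i ≤ (n : ℤ)
      · rw [winperm_neg h2.1 h2.2, winperm_pos (by omega) (by omega), neg_neg]
      · rw [winperm_other h1 h2, winperm_other (by omega) (by omega)]
  · intro i hi
    rw [buildPerm_apply]
    rcases abs_cases i with ⟨h, _⟩ | ⟨h, _⟩ <;>
      exact winperm_other (by omega) (by omega)

end GreedyPerm

section GreedyPerm2

open Finset

variable {n p : ℕ} {M : ℕ → ℤ}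

lemma card_filter_IccZ (j : ℕ) (Q : ℤ → Prop) [DecidablePred Q] :
    ((Finset.Icc (1 : ℤ) (j : ℤ)).filter Q).card
      = ((Finset.Icc 1 j).filter (fun i : ℕ => Q (i : ℤ))).card := by
  apply Finset.card_bij (fun (i : ℤ) _ => i.toNat)
  · intro a ha
    simp only [Finset.mem_filter, Finset.mem_Icc] at ha ⊢
    have hcast : ((a.toNat : ℕ) : ℤ) = a := by omega
    refine ⟨⟨by omega, by omega⟩, ?_⟩
    rw [hcast]
    exact ha.2
  · intro a ha b hb hab
    simp only [Finset.mem_filter, Finset.mem_Icc] at ha hb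
    omega
  · intro b hb
    simp only [Finset.mem_filter, Finset.mem_Icc] at hb
    refine ⟨(b : ℤ), ?_, by simp⟩
    simp only [Finset.mem_filter, Finset.mem_Icc]
    exact ⟨⟨by omega, by omega⟩, hb.2⟩

lemma negc_eq_filter (j : ℕ) :
    negc (bld p M j) = ((Finset.Icc 1 j).filter (fun i : ℕ => win p M i < 0)).card := by
  induction j with
  | zero => simp [bld, negc]
  | succ j IH =>
    rw [bld_succ, negc_append, IH]
    have hins : Finset.Icc 1 (j + 1) = insert (j + 1) (Finset.Icc 1 j) := by
      ext x; simp only [Finset.mem_Icc, Finset.mem_insert]; omega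
    rw [hins, Finset.filter_insert]
    by_cases h : win p M (j + 1) < 0
    · rw [if_pos h, if_pos h, Finset.card_insert_of_notMem
        (by simp only [Finset.mem_filter, Finset.mem_Icc]; omega)]
    · rw [if_neg h, if_neg h]
      omega

variable (hM0 : M 0 = (p : ℤ)) (hmono : Monotone M)
  (hge : ∀ j, 1 ≤ j → j ≤ n → (j : ℤ) ≤ M j) (hle : ∀ j, j ≤ n → M j ≤ (n : ℤ))

include hM0 hmono hge hle

lemma negCount_buildPerm : negCount n (buildPerm n p M hM0 hmono hge hle) = p := by
  classical
  have h1 : negCount n (buildPerm n p M hM0 hmono hge hle)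
      = ((Finset.Icc (1 : ℤ) (n : ℤ)).filter (fun i => winperm n p M i < 0)).card := by
    rw [negCount]
    congr 1
  rw [h1, card_filter_IccZ n (fun i => winperm n p M i < 0)]
  have h2 : ((Finset.Icc 1 n).filter (fun i : ℕ => winperm n p M (i : ℤ) < 0))
      = ((Finset.Icc 1 n).filter (fun i : ℕ => win p M i < 0)) := by
    apply Finset.filter_congr
    intro x hx
    simp only [Finset.mem_Icc] at hx
    rw [winperm_pos (by omega) (by omega), Int.toNat_natCast]
  rw [h2, ← negc_eq_filter, negc_final hM0 hmono hge hle]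

lemma mval_buildPerm {j : ℕ} (hj1 : 1 ≤ j) (hjn : j ≤ n) :
    mval n (buildPerm n p M hM0 hmono hge hle) ((j : ℕ) : ℤ) = M j := by
  have hnegW := negCount_buildPerm hM0 hmono hge hle
  have hpMj : (p : ℤ) ≤ M j := hM0 ▸ hmono (Nat.zero_le j)
  apply le_antisymm
  · apply Finset.max'_le
    intro x hx
    rcases Finset.mem_insert.mp hx with h | h
    · rw [hnegW] at h; omega
    · simp only [Finset.mem_image, Finset.mem_Icc] at h
      obtain ⟨i, ⟨hi1, hi2⟩, rfl⟩ := h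
      rw [buildPerm_apply, winperm_pos hi1 (by omega)]
      have ht1 : 1 ≤ i.toNat := by omega
      have ht2 : i.toNat ≤ n := by omega
      rcases win_spec hM0 hmono hge ht1 ht2 with ⟨h1, h2⟩ | ⟨h1, h2⟩
      · exact h2.trans (hmono (by omega))
      · omega
  · rcases eq_or_lt_of_le hpMj with h | h
    · have := mval_ge_p (n := n) (w := buildPerm n p M hM0 hmono hge hle) ((j : ℕ) : ℤ)
      rw [hnegW] at this
      omega
    · have hmem := (bld_inv n p M hM0 hmono hge j hjn).2.2.1 h
      obtain ⟨i, hi1, hij, hwin⟩ := (mem_bld_iff p M).mp hmem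
      have : M j = (buildPerm n p M hM0 hmono hge hle) ((i : ℕ) : ℤ) := by
        rw [buildPerm_apply, winperm_pos (by omega) (by omega), Int.toNat_natCast, hwin]
      rw [this]
      apply Finset.le_max'
      apply Finset.mem_insert_of_mem
      apply Finset.mem_image_of_mem
      simp only [Finset.mem_Icc]
      omega

lemma avoids_buildPerm : AvoidsFive n (buildPerm n p M hM0 hmono hge hle) := by
  set W := buildPerm n p M hM0 hmono hge hle with hW
  have happ : ∀ i : ℤ, 1 ≤ i → i ≤ (n : ℤ) → W i = win p M i.toNat := by
    intro i h1 h2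
    rw [hW, buildPerm_apply, winperm_pos h1 h2]
  refine ⟨?_, ?_, ?_, ?_, ?_⟩
  · -- 1 2̄
    rintro ⟨i, j, hi1, hij, hjn, hpos, hneg, hlt⟩
    rw [happ i hi1 (by omega)] at hpos hlt
    rw [happ j (by omega) hjn] at hneg hlt
    rcases win_spec hM0 hmono hge (show 1 ≤ i.toNat by omega) (show i.toNat ≤ n by omega)
      with ⟨h1, _⟩ | ⟨_, h2⟩
    · rcases win_spec hM0 hmono hge (show 1 ≤ j.toNat by omega) (show j.toNat ≤ n by omega)
        with ⟨h3, _⟩ | ⟨h4, _⟩ <;> omega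
    · omega
  · -- 2̄ 1
    rintro ⟨i, j, hi1, hij, hjn, hneg, hpos, hlt⟩
    rw [happ i hi1 (by omega)] at hneg hlt
    rw [happ j (by omega) hjn] at hpos hlt
    rcases win_spec hM0 hmono hge (show 1 ≤ i.toNat by omega) (show i.toNat ≤ n by omega)
      with ⟨h1, _⟩ | ⟨h2, _⟩
    · omega
    · rcases win_spec hM0 hmono hge (show 1 ≤ j.toNat by omega) (show j.toNat ≤ n by omega)
        with ⟨h3, _⟩ | ⟨h4, _⟩ <;> omega
  · -- 2̄ 1̄
    rintro ⟨i, j, hi1, hij, hjn, hlt, hneg⟩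
    rw [happ i hi1 (by omega)] at hlt
    rw [happ j (by omega) hjn] at hlt hneg
    have hineg : win p M i.toNat < 0 := by omega
    obtain ⟨hv1, -, -⟩ := win_neg_val hM0 hmono (show 1 ≤ i.toNat by omega) hineg
    obtain ⟨hv2, -, -⟩ := win_neg_val hM0 hmono (show 1 ≤ j.toNat by omega) hneg
    have hcnt : negc (bld p M (i.toNat - 1)) + 1 ≤ negc (bld p M (j.toNat - 1)) := by
      have hstep : negc (bld p M i.toNat) = negc (bld p M (i.toNat - 1)) + 1 := by
        rw [bld_decomp p M (show 1 ≤ i.toNat by omega), negc_append, if_pos hineg]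
      have hmono' := negc_mono_bld (p := p) (M := M) i.toNat (j.toNat - 1) (by omega)
      omega
    omega
  · -- 3 1 2
    rintro ⟨i, j, k, hi1, hij, hjk, hkn, hposj, hjltk, hklti⟩
    rw [happ i hi1 (by omega)] at hklti
    rw [happ j (by omega) (by omega)] at hposj hjltk
    rw [happ k (by omega) hkn] at hjltk hklti
    set a := i.toNat; set b := j.toNat; set c := k.toNat
    have hab : a < b := by omega
    have hbc : b < c := by omega
    have ha1 : 1 ≤ a := by omega
    have hcn : c ≤ n := by omega
    -- win a ≤ M a ≤ M (b-1)
    have hwa : win p M a ≤ M a := by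
      rcases win_spec hM0 hmono hge ha1 (by omega) with ⟨_, h2⟩ | ⟨_, h2⟩
      · exact h2
      · have : (0:ℤ) ≤ M a := le_trans (by positivity) (hM0 ▸ hmono (Nat.zero_le a))
        omega
    have hMab : M a ≤ M (b - 1) := hmono (by omega)
    have hMb : M (b - 1) ≤ M b := hmono (by omega)
    have hcnotmem : win p M c ∉ bld p M (b - 1) := by
      intro hmem
      obtain ⟨i', hi'1, hi'2, hwi'⟩ := (mem_bld_iff p M).mp hmem
      exact win_inj hM0 hmono hge hi'1 (by omega) (by omega) hcn (by omega) hwi'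
    have hcp : (p : ℤ) < win p M c := by
      rcases win_spec hM0 hmono hge (show 1 ≤ c by omega) hcn with ⟨h1, _⟩ | ⟨_, h2⟩
      · exact h1
      · omega
    rcases win_cases (p := p) (M := M) (show 1 ≤ b by omega)
      with ⟨hr, hv⟩ | ⟨hr, _, _, _, hmax⟩ | ⟨hr, hv, _⟩
    · -- record at b : win b = M b ≥ M a ≥ win a > win c > win b
      have : M a ≤ M b := hmono (by omega)
      omega
    · -- positive pick at b : maximality violated by win c
      have := hmax (win p M c) hcp (by omega) hcnotmem
      omega
    · omega
  · -- 3 1̄ 2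
    rintro ⟨i, j, k, hi1, hij, hjk, hkn, hnegj, hposk, hklti, habs⟩
    rw [happ i hi1 (by omega)] at hklti
    rw [happ j (by omega) (by omega)] at hnegj habs
    rw [happ k (by omega) hkn] at hposk hklti habs
    set a := i.toNat; set b := j.toNat; set c := k.toNat
    have ha1 : 1 ≤ a := by omega
    have hcn : c ≤ n := by omega
    have hwa : win p M a ≤ M a := by
      rcases win_spec hM0 hmono hge ha1 (by omega) with ⟨_, h2⟩ | ⟨_, h2⟩
      · exact h2
      · have : (0:ℤ) ≤ M a := le_trans (by positivity) (hM0 ▸ hmono (Nat.zero_le a))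
        omega
    have hcp : (p : ℤ) < win p M c := by
      rcases win_spec hM0 hmono hge (show 1 ≤ c by omega) hcn with ⟨h1, _⟩ | ⟨_, h2⟩
      · exact h1
      · omega
    obtain ⟨-, -, hall⟩ := win_neg_val hM0 hmono (show 1 ≤ b by omega) hnegj
    have hMab : M a ≤ M b := hmono (by omega)
    have hMb : M (b - 1) ≤ M b := hmono (by omega)
    have hmem := hall (win p M c) hcp (by omega)
    obtain ⟨i', hi'1, hi'2, hwi'⟩ := (mem_bld_iff p M).mp hmem
    exact win_inj hM0 hmono hge hi'1 (by omega) (by omega) hcn (by omega) hwi'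

end GreedyPerm2

section Semi

open Finset

variable {n : ℕ}

noncomputable def Dst (lt : Fin n → Fin n → Prop) (y : Fin n) : Finset (Fin n) :=
  @Finset.filter _ (fun x => lt x y) (Classical.decPred _) Finset.univ

noncomputable def Ust (lt : Fin n → Fin n → Prop) (y : Fin n) : Finset (Fin n) :=
  @Finset.filter _ (fun x => lt y x) (Classical.decPred _) Finset.univ

lemma mem_Dst {lt : Fin n → Fin n → Prop} {x y : Fin n} : x ∈ Dst lt y ↔ lt x y := by
  simp [Dst]

lemma mem_Ust {lt : Fin n → Fin n → Prop} {x y : Fin n} : x ∈ Ust lt y ↔ lt y x := by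
  simp [Ust]

noncomputable def dd (lt : Fin n → Fin n → Prop) (y : Fin n) : ℕ := (Dst lt y).card
noncomputable def uu (lt : Fin n → Fin n → Prop) (y : Fin n) : ℕ := (Ust lt y).card

variable {lt : Fin n → Fin n → Prop} {g : Set (Fin n)}

lemma dd_le (y : Fin n) : dd lt y ≤ n := by
  have := Finset.card_le_card (Finset.subset_univ (Dst lt y))
  simpa [dd] using this

lemma uu_le (y : Fin n) : uu lt y ≤ n := by
  have := Finset.card_le_card (Finset.subset_univ (Ust lt y))
  simpa [uu] using this

section WithH
variable (h : IsBCUIO n lt g)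
include h

lemma hirr' : ∀ x, ¬ lt x x := h.1
lemma htr' : ∀ x y z, lt x y → lt y z → lt x z := h.2.1

lemma Dtot (y z : Fin n) : Dst lt y ⊆ Dst lt z ∨ Dst lt z ⊆ Dst lt y := by
  by_contra hc
  push_neg at hc
  obtain ⟨a, ha1, ha2⟩ := Finset.not_subset.mp hc.1
  obtain ⟨b, hb1, hb2⟩ := Finset.not_subset.mp hc.2
  rw [mem_Dst] at ha1 hb1
  rw [mem_Dst] at ha2 hb2
  have htr := h.2.1
  apply h.2.2.1
  refine ⟨a, y, b, z, ha1, hb1, ?_, ?_, ?_, ?_⟩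
  · refine ⟨?_, ?_, ?_⟩
    · intro hab; rw [hab] at ha1; exact hb2 ha1
    · intro hab; exact ha2 (htr _ _ _ hab hb1)
    · intro hba; exact hb2 (htr _ _ _ hba ha1)
  · refine ⟨?_, ha2, ?_⟩
    · intro haz; rw [haz] at ha1; exact hb2 (htr _ _ _ hb1 ha1)
    · intro hza; exact hb2 (htr _ _ _ hb1 (htr _ _ _ hza ha1))
  · refine ⟨?_, ?_, hb2⟩
    · intro hyb; rw [← hyb] at hb1; exact ha2 (htr _ _ _ ha1 hb1)
    · intro hyb; exact ha2 (htr _ _ _ (htr _ _ _ ha1 hyb) hb1)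
  · refine ⟨?_, ?_, ?_⟩
    · intro hyz; rw [hyz] at ha1; exact ha2 ha1
    · intro hyz; exact ha2 (htr _ _ _ ha1 hyz)
    · intro hzy; exact hb2 (htr _ _ _ hb1 hzy)

lemma Utot (y z : Fin n) : Ust lt y ⊆ Ust lt z ∨ Ust lt z ⊆ Ust lt y := by
  by_contra hc
  push_neg at hc
  obtain ⟨a, ha1, ha2⟩ := Finset.not_subset.mp hc.1
  obtain ⟨b, hb1, hb2⟩ := Finset.not_subset.mp hc.2
  rw [mem_Ust] at ha1 hb1
  rw [mem_Ust] at ha2 hb2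
  have htr := h.2.1
  apply h.2.2.1
  refine ⟨y, a, z, b, ha1, hb1, ?_, ?_, ?_, ?_⟩
  · refine ⟨?_, ?_, ?_⟩
    · intro hyz; rw [hyz] at ha1; exact ha2 ha1
    · intro hyz; exact hb2 (htr _ _ _ hyz hb1)
    · intro hzy; exact ha2 (htr _ _ _ hzy ha1)
  · refine ⟨?_, hb2, ?_⟩
    · intro hyb; rw [← hyb] at hb1; exact ha2 (htr _ _ _ hb1 ha1)
    · intro hby; exact ha2 (htr _ _ _ (htr _ _ _ hb1 hby) ha1)
  · refine ⟨?_, ?_, ha2⟩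
    · intro haz; rw [haz] at ha1; exact hb2 (htr _ _ _ ha1 hb1)
    · intro haz; exact hb2 (htr _ _ _ (htr _ _ _ ha1 haz) hb1)
  · refine ⟨?_, ?_, ?_⟩
    · intro hab; rw [hab] at ha2; exact ha2 hb1
    · intro hab; exact hb2 (htr _ _ _ ha1 hab)
    · intro hba; exact ha2 (htr _ _ _ hb1 hba)

lemma lt_dd {x y : Fin n} (hxy : lt x y) : dd lt x < dd lt y := by
  have hsub : Dst lt x ⊂ Dst lt y := by
    constructor
    · intro a ha
      rw [mem_Dst] at ha ⊢
      exact h.2.1 _ _ _ ha hxy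
    · intro hsub'
      have : x ∈ Dst lt x := hsub' (mem_Dst.mpr hxy)
      exact h.1 x (mem_Dst.mp this)
  exact Finset.card_lt_card hsub

lemma lt_uu {x y : Fin n} (hxy : lt x y) : uu lt y < uu lt x := by
  have hsub : Ust lt y ⊂ Ust lt x := by
    constructor
    · intro a ha
      rw [mem_Ust] at ha ⊢
      exact h.2.1 _ _ _ hxy ha
    · intro hsub'
      have : y ∈ Ust lt y := hsub' (mem_Ust.mpr hxy)
      exact h.1 y (mem_Ust.mp this)
  exact Finset.card_lt_card hsub

lemma Dsub_of_card {y z : Fin n} (hc : dd lt y ≤ dd lt z) : Dst lt y ⊆ Dst lt z := by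
  rcases Dtot h y z with hs | hs
  · exact hs
  · have := Finset.eq_of_subset_of_card_le hs hc
    rw [this]

lemma Usub_of_card {y z : Fin n} (hc : uu lt y ≤ uu lt z) : Ust lt y ⊆ Ust lt z := by
  rcases Utot h y z with hs | hs
  · exact hs
  · have := Finset.eq_of_subset_of_card_le hs hc
    rw [this]

lemma upset_trans' {x y z : Fin n} (hxy : lt x y) (hdz : dd lt y ≤ dd lt z) : lt x z :=
  mem_Dst.mp (Dsub_of_card h hdz (mem_Dst.mpr hxy))

lemma d_lt_u_ge {y z : Fin n} (hd : dd lt y < dd lt z) : uu lt z ≤ uu lt y := by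
  by_contra hc
  push_neg at hc
  have hDsub : Dst lt y ⊆ Dst lt z := Dsub_of_card h (le_of_lt hd)
  have hDne : Dst lt y ≠ Dst lt z := by
    intro he
    rw [dd, dd, he] at hd
    omega
  obtain ⟨a, haz, hay⟩ := Finset.exists_of_ssubset
    ⟨hDsub, fun hsub => hDne (Finset.Subset.antisymm hDsub hsub)⟩
  have hUsub : Ust lt y ⊆ Ust lt z := Usub_of_card h (le_of_lt hc)
  have hUne : Ust lt y ≠ Ust lt z := by
    intro he
    rw [uu, uu, he] at hc
    omega
  obtain ⟨b, hbz, hby⟩ := Finset.exists_of_ssubset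
    ⟨hUsub, fun hsub => hUne (Finset.Subset.antisymm hUsub hsub)⟩
  rw [mem_Dst] at haz hay
  rw [mem_Ust] at hbz hby
  have htr := h.2.1
  apply h.2.2.2.1
  refine ⟨a, z, b, y, haz, hbz, ?_, ?_, ?_⟩
  · refine ⟨?_, hay, ?_⟩
    · intro hay'
      rw [hay'] at haz
      have := lt_uu h haz
      omega
    · intro hya
      have := lt_uu h (htr _ _ _ hya haz)
      omega
  · refine ⟨?_, ?_, ?_⟩
    · intro hzy
      rw [hzy] at hd
      omega
    · intro hzy
      have := lt_dd h hzy
      omega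
    · intro hyz
      have := lt_uu h hyz
      omega
  · refine ⟨?_, ?_, hby⟩
    · intro hby'
      rw [hby'] at hbz
      have := lt_dd h hbz
      omega
    · intro hb'y
      have := lt_dd h (htr _ _ _ hbz hb'y)
      omega


lemma betaVal_eq (y : Fin n) : betaVal lt y = (dd lt y : ℤ) - uu lt y := by
  have hD : {x : Fin n | lt x y ∨ x = y} = insert y {x : Fin n | lt x y} := by
    ext z; simp only [Set.mem_setOf_eq, Set.mem_insert_iff]; tauto
  have hU : {z : Fin n | lt y z ∨ z = y} = insert y {z : Fin n | lt y z} := by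
    ext z; simp only [Set.mem_setOf_eq, Set.mem_insert_iff]; tauto
  have hDn : {x : Fin n | lt x y}.ncard = dd lt y := by
    rw [@ncard_setOf_fin n (fun x => lt x y) (Classical.decPred _)]
    rfl
  have hUn : {z : Fin n | lt y z}.ncard = uu lt y := by
    rw [@ncard_setOf_fin n (fun z => lt y z) (Classical.decPred _)]
    rfl
  rw [betaVal, hD, hU, Set.ncard_insert_of_notMem (by simp only [Set.mem_setOf_eq]; exact h.1 y),
    Set.ncard_insert_of_notMem (by simp only [Set.mem_setOf_eq]; exact h.1 y), hDn, hUn]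
  push_cast
  ring

lemma dd_grounded {x : Fin n} (hx : x ∈ g) : dd lt x = 0 := by
  rw [dd, Finset.card_eq_zero]
  ext a
  simp only [Finset.notMem_empty, iff_false]
  intro ha
  exact h.2.2.2.2.1 x hx a (mem_Dst.mp ha)

end WithH

open Classical in
noncomputable def gcard (g : Set (Fin n)) : ℕ :=
  ((Finset.univ : Finset (Fin n)).filter (fun x => x ∈ g)).card

open Classical in
noncomputable def Kf (lt : Fin n → Fin n → Prop) (g : Set (Fin n)) : Fin n → ℕ := fun x =>
  ((dd lt x) * (n + 1) + (n - uu lt x)) * 2 + (if x ∈ g then 0 else 1)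

noncomputable def sortK (lt : Fin n → Fin n → Prop) (g : Set (Fin n)) : Equiv.Perm (Fin n) :=
  Tuple.sort (Kf lt g)

lemma sortK_mono : Monotone (Kf lt g ∘ sortK lt g) := Tuple.monotone_sort _

lemma K_lt_of_dlt {x y : Fin n} (hd : dd lt x < dd lt y) : Kf lt g x < Kf lt g y := by
  classical
  have h1 : (dd lt x + 1) * (n + 1) ≤ dd lt y * (n + 1) :=
    Nat.mul_le_mul_right _ (by omega)
  rw [add_mul, one_mul] at h1
  have h2 : n - uu lt x ≤ n := Nat.sub_le _ _
  rw [Kf, Kf]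
  set A := dd lt x * (n + 1) with hA
  set B := dd lt y * (n + 1) with hB
  by_cases hx : x ∈ g <;> by_cases hy : y ∈ g <;>
    simp only [hx, hy, if_true, if_false] <;> omega

lemma dd_le_of_K {x y : Fin n} (hK : Kf lt g x ≤ Kf lt g y) : dd lt x ≤ dd lt y := by
  by_contra hc
  push_neg at hc
  have := K_lt_of_dlt (lt := lt) (g := g) hc
  omega

lemma uu_ge_of_K {x y : Fin n} (hK : Kf lt g x ≤ Kf lt g y) (hd : dd lt x = dd lt y) :
    uu lt y ≤ uu lt x := by
  classical
  rw [Kf, Kf, ← hd] at hK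
  have h2 : uu lt x ≤ n := uu_le x
  have h3 : uu lt y ≤ n := uu_le y
  set A := dd lt x * (n + 1) with hA
  by_cases hx : x ∈ g <;> by_cases hy : y ∈ g <;>
    simp only [hx, hy, if_true, if_false] at hK <;> omega

lemma K_grounded (h : IsBCUIO n lt g) {x y : Fin n} (hx : x ∈ g) (hy : y ∉ g) :
    Kf lt g x < Kf lt g y := by
  classical
  have hdx : dd lt x = 0 := dd_grounded h hx
  rcases Nat.eq_zero_or_pos (dd lt y) with h0 | hpos
  · have hb := h.2.2.2.2.2 x hx y hy
    rw [betaVal_eq h, betaVal_eq h, hdx, h0] at hb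
    have huyx : uu lt y ≤ uu lt x := by
      push_cast at hb
      omega
    have h2 : uu lt x ≤ n := uu_le x
    rw [Kf, Kf, hdx, h0, if_pos hx, if_neg hy]
    simp only [Nat.zero_mul, Nat.zero_add]
    omega
  · exact K_lt_of_dlt (g := g) (by omega)

section Sorted

variable (h : IsBCUIO n lt g)
include h

lemma sdd {i j : Fin n} (hij : i ≤ j) :
    dd lt (sortK lt g i) ≤ dd lt (sortK lt g j) :=
  dd_le_of_K (sortK_mono (lt := lt) (g := g) hij)

lemma suu {i j : Fin n} (hij : i ≤ j) :
    uu lt (sortK lt g j) ≤ uu lt (sortK lt g i) := by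
  rcases eq_or_lt_of_le (sdd h hij : dd lt (sortK lt g i) ≤ _) with he | hlt
  · exact uu_ge_of_K (sortK_mono (lt := lt) (g := g) hij) he
  · exact d_lt_u_ge h hlt

lemma spos {a b : Fin n} (hab : lt (sortK lt g a) (sortK lt g b)) : a < b := by
  have hd := lt_dd h hab
  by_contra hc
  push_neg at hc
  have := sdd h hc
  omega

lemma slt_iff (i j : Fin n) :
    lt (sortK lt g i) (sortK lt g j) ↔ n - uu lt (sortK lt g i) ≤ (j : ℕ) := by
  classical
  set S := (Finset.univ : Finset (Fin n)).filter (fun j => lt (sortK lt g i) (sortK lt g j))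
    with hS
  have hup : ∀ a b : Fin n, a ≤ b → a ∈ S → b ∈ S := by
    intro a b hab ha
    simp only [hS, Finset.mem_filter, Finset.mem_univ, true_and] at ha ⊢
    exact upset_trans' h ha (sdd h hab)
  have hcard : S.card = uu lt (sortK lt g i) := by
    rw [hS, card_filter_equiv (sortK lt g) _ (fun z => lt (sortK lt g i) z) (fun _ => Iff.rfl)]
    rw [uu, Ust]
  have := upclosed_mem_iff S hup j
  simp only [hS, Finset.mem_filter, Finset.mem_univ, true_and] at this
  rw [this, hcard]

lemma sg_iff (i : Fin n) : sortK lt g i ∈ g ↔ (i : ℕ) < gcard g := by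
  classical
  set S := (Finset.univ : Finset (Fin n)).filter (fun i => sortK lt g i ∈ g) with hS
  have hdown : ∀ a b : Fin n, a ≤ b → b ∈ S → a ∈ S := by
    intro a b hab hb
    simp only [hS, Finset.mem_filter, Finset.mem_univ, true_and] at hb ⊢
    by_contra ha
    have h1 := K_grounded h hb ha
    have h2 := sortK_mono (lt := lt) (g := g) hab
    simp only [Function.comp_apply] at h2
    omega
  have hcard : S.card = gcard g := by
    rw [hS, card_filter_equiv (sortK lt g) _ (fun z => z ∈ g) (fun _ => Iff.rfl)]
    rw [gcard]
  have := downclosed_mem_iff S hdown i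
  simp only [hS, Finset.mem_filter, Finset.mem_univ, true_and] at this
  rw [this, hcard]

lemma uu_pos_bound (k : Fin n) : uu lt (sortK lt g k) ≤ n - 1 - (k : ℕ) := by
  classical
  have hsub : (Finset.univ : Finset (Fin n)).filter (fun j => lt (sortK lt g k) (sortK lt g j))
      ⊆ (Finset.univ : Finset (Fin n)).filter (fun z : Fin n => (k : ℕ) + 1 ≤ (z : ℕ)) := by
    intro z hz
    simp only [Finset.mem_filter, Finset.mem_univ, true_and] at hz ⊢
    have := spos h hz
    omega
  have hcard : ((Finset.univ : Finset (Fin n)).filter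
      (fun j => lt (sortK lt g k) (sortK lt g j))).card = uu lt (sortK lt g k) := by
    rw [card_filter_equiv (sortK lt g) _ (fun z => lt (sortK lt g k) z) (fun _ => Iff.rfl)]
    rw [uu, Ust]
  have h2 := Finset.card_le_card hsub
  rw [hcard, card_fin_ge n ((k : ℕ) + 1) k.isLt] at h2
  omega

lemma uu_compl_bound (y : Fin n) : uu lt y ≤ n - gcard g := by
  classical
  have hsub : Ust lt y ⊆ (Finset.univ : Finset (Fin n)).filter (fun x => x ∉ g) := by
    intro b hb
    simp only [Finset.mem_filter, Finset.mem_univ, true_and]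
    intro hbg
    exact h.2.2.2.2.1 b hbg y (mem_Ust.mp hb)
  have hcard : ((Finset.univ : Finset (Fin n)).filter (fun x : Fin n => x ∉ g)).card
      = n - gcard g := by
    have hpart := Finset.card_filter_add_card_filter_not
      (s := (Finset.univ : Finset (Fin n))) (p := fun x : Fin n => x ∈ g)
    have hg : ((Finset.univ : Finset (Fin n)).filter (fun x : Fin n => x ∈ g)).card
        = gcard g := by
      rw [gcard]
    have hcn : ((Finset.univ : Finset (Fin n)).filter (fun x : Fin n => ¬ x ∈ g))
        = (Finset.univ : Finset (Fin n)).filter (fun x : Fin n => x ∉ g) := rfl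
    rw [hcn, hg, Finset.card_univ, Fintype.card_fin] at hpart
    omega
  have := Finset.card_le_card hsub
  rw [hcard] at this
  exact le_trans this le_rfl

lemma gcard_le : gcard (n := n) g ≤ n := by
  classical
  have : gcard g ≤ (Finset.univ : Finset (Fin n)).card := by
    rw [gcard]
    exact Finset.card_le_card (Finset.filter_subset _ _)
  simpa using this

end Sorted

end Semi

section Part3Main

open Finset

variable {n : ℕ} {lt : Fin n → Fin n → Prop} {g : Set (Fin n)}

noncomputable def ufun (lt : Fin n → Fin n → Prop) (g : Set (Fin n)) : ℕ → ℕ := fun k =>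
  if hk : k < n then uu lt (sortK lt g ⟨k, hk⟩) else 0

noncomputable def Mfun (lt : Fin n → Fin n → Prop) (g : Set (Fin n)) : ℕ → ℤ := fun j =>
  if j = 0 then (gcard g : ℤ) else (n : ℤ) - ufun lt g (j - 1)

lemma Mfun_zero : Mfun lt g 0 = (gcard g : ℤ) := by simp [Mfun]

section withH

variable (h : IsBCUIO n lt g)
include h

lemma ufun_le (k : ℕ) : ufun lt g k ≤ n - gcard g := by
  rw [ufun]
  split
  · exact uu_compl_bound h _
  · omega

lemma ufun_anti {k l : ℕ} (hkl : k ≤ l) : ufun lt g l ≤ ufun lt g k := by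
  rw [ufun, ufun]
  by_cases hl : l < n
  · have hk : k < n := by omega
    rw [dif_pos hl, dif_pos hk]
    exact suu h (by rw [Fin.le_def]; exact hkl)
  · rw [dif_neg hl]
    omega

lemma Mfun_mono : Monotone (Mfun lt g) := by
  intro a b hab
  have hpgn : gcard (n := n) g ≤ n := gcard_le h
  rcases Nat.eq_zero_or_pos a with ha0 | ha1
  · subst ha0
    rcases Nat.eq_zero_or_pos b with hb0 | hb1
    · subst hb0; exact le_rfl
    · rw [Mfun, Mfun, if_pos rfl, if_neg (by omega)]
      have := ufun_le h (g := g) (b - 1)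
      omega
  · have hb1 : 1 ≤ b := by omega
    rw [Mfun, Mfun, if_neg (by omega), if_neg (by omega)]
    have := ufun_anti h (g := g) (show a - 1 ≤ b - 1 by omega)
    omega

lemma Mfun_ge {j : ℕ} (h1 : 1 ≤ j) (h2 : j ≤ n) : (j : ℤ) ≤ Mfun lt g j := by
  rw [Mfun, if_neg (by omega), ufun, dif_pos (show j - 1 < n by omega)]
  have := uu_pos_bound h (g := g) (⟨j - 1, by omega⟩ : Fin n)
  simp only at this
  omega

lemma Mfun_le {j : ℕ} (h2 : j ≤ n) : Mfun lt g j ≤ (n : ℤ) := by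
  have hpgn : gcard (n := n) g ≤ n := gcard_le h
  rw [Mfun]
  split
  · omega
  · omega

theorem part3 : ∃ w : Equiv.Perm ℤ, IsBn n w ∧ AvoidsFive n w ∧
    BCIso n (qltF n w) lt (groundedF n w) g := by
  classical
  have hM0 : Mfun lt g 0 = ((gcard g : ℕ) : ℤ) := Mfun_zero
  have hmono := Mfun_mono h
  have hge : ∀ j, 1 ≤ j → j ≤ n → (j : ℤ) ≤ Mfun lt g j := fun j a b => Mfun_ge h a b
  have hle : ∀ j, j ≤ n → Mfun lt g j ≤ (n : ℤ) := fun j a => Mfun_le h a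
  refine ⟨buildPerm n (gcard g) (Mfun lt g) hM0 hmono hge hle,
    buildPerm_isBn hM0 hmono hge hle, avoids_buildPerm hM0 hmono hge hle, ?_⟩
  refine ⟨sortK lt g, ?_, ?_⟩
  · intro i j
    have hm := mval_buildPerm hM0 hmono hge hle (j := (i : ℕ) + 1) (by omega)
      (by omega)
    have hcast : (((i : ℕ) : ℤ) + 1) = ((((i : ℕ) + 1 : ℕ)) : ℤ) := by push_cast; ring
    have hMv : Mfun lt g ((i : ℕ) + 1) = (n : ℤ) - uu lt (sortK lt g i) := by
      rw [Mfun, if_neg (by omega), ufun, dif_pos (show (i : ℕ) + 1 - 1 < n by omega)]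
      congr
    rw [qltF, hcast, hm, hMv, slt_iff h i j]
    have huu : uu lt (sortK lt g i) ≤ n := uu_le _
    constructor <;> intro <;> omega
  · intro i
    simp only [groundedF, Set.mem_setOf_eq]
    rw [negCount_buildPerm hM0 hmono hge hle, sg_iff h i]
    constructor <;> intro <;> omega

end withH

end Part3Main

/-- For `w ∈ B_n` avoiding the five signed patterns, `(Q(w), {1,…,p})`
is a type-BC unit interval order on `n` elements, and `w ↦ (Q(w), {1,…,p})` induces a
bijection from the set of such `w` onto the isomorphism classes of type-BC unit interval
orders on `n` elements. -/
theorem stmt_10 (n : ℕ) :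
    (∀ w : Equiv.Perm ℤ, IsBn n w → AvoidsFive n w →
      IsBCUIO n (qltF n w) (groundedF n w)) ∧
    (∀ v w : Equiv.Perm ℤ, IsBn n v → AvoidsFive n v → IsBn n w → AvoidsFive n w →
      BCIso n (qltF n v) (qltF n w) (groundedF n v) (groundedF n w) → v = w) ∧
    (∀ (lt : Fin n → Fin n → Prop) (g : Set (Fin n)), IsBCUIO n lt g →
      ∃ w : Equiv.Perm ℤ, IsBn n w ∧ AvoidsFive n w ∧
        BCIso n (qltF n w) lt (groundedF n w) g) := by
  refine ⟨fun w hw ha => part1 n w hw ha, ?_, fun lt g h => part3 h⟩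
  intro v w hv hva hw hwa hiso
  exact part2 n v w hv hva hw hwa hiso
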